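/- arXiv:2412.00040 — 10 statements merged into one kernel-verified Lean document; each statement's English description precedes it below -/
import Mathlib

section
/- For every nonnegative integer n, the alternating sum ∑_{k=0}^{n} (−1)^k · C(n,k) · 2^{−k} · C(2k,k) equals 2^{−n} · C(n, n/2) if n is even, and equals 0 if n is odd. (Here C(a,b) denotes the usual binomial coefficient and the identity is an identity of rational numbers.) -/
open Polynomial Finset

lemma key (n : ℕ) :
    ∑ k ∈ Finset.range (n+1), (-1:ℚ)^k * (n.choose k) * 2^(n-k) * ((2*k).choose k)
    = if Even n then (n.choose (n/2) : ℚ) else 0 := by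
  have h : (((-(1+X)^2 + 2*X : ℚ[X]))^n).coeff n = ((-(1+X^2) : ℚ[X])^n).coeff n := by
    congr 1; ring
  rw [add_pow (-(1+X)^2 : ℚ[X]) (2*X) n, finset_sum_coeff] at h
  have hterm : ∀ k ∈ Finset.range (n+1),
      ((-(1+X)^2 : ℚ[X])^k * (2*X)^(n-k) * (n.choose k : ℚ[X])).coeff n
      = (-1:ℚ)^k * (n.choose k) * 2^(n-k) * ((2*k).choose k) := by
    intro k hk
    rw [Finset.mem_range, Nat.lt_succ_iff] at hk
    have e : ((1+X:ℚ[X]))^(2*k) = (((1+X)^2)^k) := by rw [← pow_mul]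
    have e2 : ((-(1+X)^2 : ℚ[X])^k * (2*X)^(n-k) * (n.choose k : ℚ[X]))
        = C ((-1:ℚ)^k * 2^(n-k) * (n.choose k)) * ((1+X)^(2*k) * X^(n-k)) := by
      rw [e, neg_pow]
      simp only [map_mul, map_pow, map_neg, map_one, C_eq_natCast, map_ofNat]
      ring
    have hc : ((1+X:ℚ[X])^(2*k) * X^(n-k)).coeff n = ((2*k).choose k : ℚ) := by
      have h3 := coeff_mul_X_pow ((1+X:ℚ[X])^(2*k)) (n-k) k
      rw [Nat.add_sub_cancel' hk] at h3
      rw [h3, add_comm, coeff_X_add_one_pow]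
    rw [e2, coeff_C_mul, hc]; ring
  rw [Finset.sum_congr rfl hterm] at h
  rw [h]
  have e3 : ((-(1+X^2) : ℚ[X])^n) = C ((-1:ℚ)^n) * (1+X^2)^n := by
    rw [neg_pow]; simp
  rw [e3, coeff_C_mul, add_pow (1:ℚ[X]) (X^2) n, finset_sum_coeff]
  have hterm2 : ∀ j ∈ Finset.range (n+1),
      (((1:ℚ[X])^j * (X^2)^(n-j) * (n.choose j : ℚ[X]))).coeff n
      = (n.choose j : ℚ) * (if n = 2*(n-j) then 1 else 0) := by
    intro j hj
    rw [one_pow, one_mul, ← pow_mul, show ((n.choose j : ℚ[X])) = C ((n.choose j : ℚ)) by simp,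
      mul_comm, coeff_C_mul, coeff_X_pow]
  rw [Finset.sum_congr rfl hterm2]
  by_cases hn : Even n
  · obtain ⟨m, hm⟩ := hn
    have h1 : ∀ j ∈ Finset.range (n+1),
        (n.choose j : ℚ) * (if n = 2*(n-j) then 1 else 0)
        = if j = m then (n.choose j : ℚ) else 0 := by
      intro j hj
      rw [Finset.mem_range, Nat.lt_succ_iff] at hj
      by_cases hc : n = 2*(n-j)
      · rw [if_pos hc, if_pos (by omega), mul_one]
      · rw [if_neg hc, if_neg (by omega), mul_zero]
    rw [Finset.sum_congr rfl h1, Finset.sum_ite_eq' _ m, if_pos (by simp [Finset.mem_range]; omega),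
      if_pos ⟨m, hm⟩]
    have : (-1:ℚ)^n = 1 := Even.neg_one_pow ⟨m, hm⟩
    rw [this, one_mul]
    congr 2
    omega
  · rw [if_neg hn]
    have h1 : ∀ j ∈ Finset.range (n+1),
        (n.choose j : ℚ) * (if n = 2*(n-j) then 1 else 0) = 0 := by
      intro j hj
      rw [if_neg (fun hc => hn ⟨n - j, by omega⟩), mul_zero]
    rw [Finset.sum_congr rfl h1, Finset.sum_const_zero, mul_zero]

theorem knuth_old_sum (n : ℕ) :
    ∑ k ∈ Finset.range (n + 1),
      (-1 : ℚ) ^ k * (n.choose k : ℚ) * (2 : ℚ) ^ (-(k : ℤ)) * ((2 * k).choose k : ℚ)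
    = if Even n then (2 : ℚ) ^ (-(n : ℤ)) * (n.choose (n / 2) : ℚ) else 0 := by
  have h1 : ∀ k ∈ Finset.range (n+1),
      (-1 : ℚ) ^ k * (n.choose k : ℚ) * (2 : ℚ) ^ (-(k : ℤ)) * ((2 * k).choose k : ℚ)
      = (2:ℚ) ^ (-(n:ℤ)) * ((-1:ℚ)^k * (n.choose k) * 2^(n-k) * ((2*k).choose k)) := by
    intro k hk
    rw [Finset.mem_range, Nat.lt_succ_iff] at hk
    have : (2:ℚ) ^ (-(n:ℤ)) * 2^(n-k) = (2:ℚ) ^ (-(k:ℤ)) := by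
      rw [show ((2:ℚ)^(n-k)) = (2:ℚ)^((n-k : ℕ) : ℤ) from (zpow_natCast 2 (n-k)).symm,
        ← zpow_add₀ (by norm_num : (2:ℚ) ≠ 0)]
      congr 1
      omega
    rw [← this]; ring
  rw [Finset.sum_congr rfl h1, ← Finset.mul_sum, key]
  by_cases hn : Even n
  · rw [if_pos hn, if_pos hn]
  · rw [if_neg hn, if_neg hn, mul_zero]
end

section
/- For every real number u > −1, ∫_0^π (cos(x/2))^u dx = 2^{−u} · π · B(u, u/2), and likewise ∫_0^π (sin(x/2))^u dx = 2^{−u} · π · B(u, u/2), where the powers are real powers (the bases cos(x/2) and sin(x/2) are nonnegative on [0, π]). -/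
open Real

/-- Generalized binomial coefficient `B(a,b) = Γ(a+1)/(Γ(b+1)·Γ(a−b+1))`. -/
noncomputable def gbinom (a b : ℝ) : ℝ :=
  Real.Gamma (a + 1) / (Real.Gamma (b + 1) * Real.Gamma (a - b + 1))

theorem beta_val (u : ℝ) (hu : u > -1) :
    (∫ t in (0:ℝ)..1, t ^ ((u+1)/2 - 1) * (1 - t) ^ ((1/2 : ℝ) - 1)) =
      √π * Real.Gamma ((u+1)/2) / Real.Gamma (u/2 + 1) := by
  have hs : (0:ℝ) < (u+1)/2 := by linarith
  have hcb : (Complex.betaIntegral (((u+1)/2 : ℝ) : ℂ) (((1:ℝ)/2 : ℝ) : ℂ)) =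
      ((∫ t in (0:ℝ)..1, t ^ ((u+1)/2 - 1) * (1 - t) ^ ((1/2 : ℝ) - 1) : ℝ) : ℂ) := by
    rw [Complex.betaIntegral, ← intervalIntegral.integral_ofReal]
    refine intervalIntegral.integral_congr fun x hx => ?_
    rw [Set.uIcc_of_le zero_le_one] at hx
    push_cast
    rw [Complex.ofReal_cpow hx.1, Complex.ofReal_cpow (by linarith [hx.2])]
    push_cast
    ring_nf
  have hrel := Complex.Gamma_mul_Gamma_eq_betaIntegral
    (s := (((u+1)/2 : ℝ) : ℂ)) (t := (((1:ℝ)/2 : ℝ) : ℂ)) (by simpa using hs) (by norm_num)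
  rw [hcb] at hrel
  have hsum : (((u+1)/2 : ℝ) : ℂ) + (((1:ℝ)/2 : ℝ) : ℂ) = ((u/2 + 1 : ℝ) : ℂ) := by push_cast; ring
  rw [hsum, Complex.Gamma_ofReal, Complex.Gamma_ofReal, Complex.Gamma_ofReal,
    ← Complex.ofReal_mul, ← Complex.ofReal_mul] at hrel
  have hrel' : Real.Gamma ((u+1)/2) * Real.Gamma (1/2) =
      Real.Gamma (u/2+1) * ∫ t in (0:ℝ)..1, t ^ ((u+1)/2 - 1) * (1 - t) ^ ((1/2 : ℝ) - 1) := by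
    exact_mod_cast hrel
  have hpos : 0 < Real.Gamma (u/2 + 1) := Real.Gamma_pos_of_pos (by linarith)
  rw [Real.Gamma_one_half_eq] at hrel'
  rw [eq_div_iff hpos.ne']
  linear_combination -hrel'

theorem sin_int (u : ℝ) :
    (∫ x in (0:ℝ)..π, Real.sin (x/2) ^ u) =
      ∫ t in (0:ℝ)..1, t ^ ((u+1)/2 - 1) * (1 - t) ^ ((1/2:ℝ) - 1) := by
  have h2 : (∫ t in (0:ℝ)..1, t ^ ((u+1)/2 - 1) * (1 - t) ^ ((1/2:ℝ) - 1)) =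
      ∫ t in Set.Ioo (0:ℝ) 1, t ^ ((u+1)/2 - 1) * (1 - t) ^ ((1/2:ℝ) - 1) := by
    rw [intervalIntegral.integral_of_le zero_le_one, MeasureTheory.integral_Ioc_eq_integral_Ioo]
  have h1 : (∫ x in (0:ℝ)..π, Real.sin (x/2) ^ u) =
      ∫ x in Set.Ioo (0:ℝ) π, Real.sin (x/2) ^ u := by
    rw [intervalIntegral.integral_of_le pi_pos.le, MeasureTheory.integral_Ioc_eq_integral_Ioo]
  rw [h1, h2]
  set f : ℝ → ℝ := fun x => Real.sin (x/2) ^ (2:ℕ) with hf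
  have himg : f '' Set.Ioo 0 π = Set.Ioo 0 1 := by
    ext t
    constructor
    · rintro ⟨x, hx, rfl⟩
      have h1 : 0 < x/2 := by linarith [hx.1]
      have h2 : x/2 < π/2 := by linarith [hx.2]
      have hs0 : 0 < Real.sin (x/2) := Real.sin_pos_of_pos_of_lt_pi h1 (by linarith [pi_pos])
      have hs1 : Real.sin (x/2) < 1 := by
        have := Real.strictMonoOn_sin ⟨by linarith [pi_pos], h2.le⟩
          ⟨by linarith [pi_pos], le_refl _⟩ h2
        simpa using this
      constructor
      · positivity
      · calc Real.sin (x/2)^(2:ℕ) < 1^(2:ℕ) := by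
              apply pow_lt_pow_left₀ hs1 hs0.le; norm_num
           _ = 1 := one_pow _
    · rintro ⟨ht0, ht1⟩
      refine ⟨2 * Real.arcsin (Real.sqrt t), ⟨?_, ?_⟩, ?_⟩
      · have : 0 < Real.arcsin (Real.sqrt t) :=
          Real.arcsin_pos.2 (Real.sqrt_pos.2 ht0)
        linarith
      · have : Real.arcsin (Real.sqrt t) < π/2 := by
          apply Real.arcsin_lt_pi_div_two.2
          calc Real.sqrt t < Real.sqrt 1 := Real.sqrt_lt_sqrt ht0.le ht1
            _ = 1 := Real.sqrt_one
        linarith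
      · simp only [hf]
        rw [show 2 * Real.arcsin (Real.sqrt t) / 2 = Real.arcsin (Real.sqrt t) by ring,
          Real.sin_arcsin (by linarith [Real.sqrt_nonneg t]) (Real.sqrt_le_one.2 ht1.le), Real.sq_sqrt ht0.le]
  rw [← himg]
  rw [MeasureTheory.integral_image_eq_integral_abs_deriv_smul measurableSet_Ioo
    (f' := fun x => Real.sin (x/2) * Real.cos (x/2)) ?_ ?_]
  · refine MeasureTheory.setIntegral_congr_fun measurableSet_Ioo fun x hx => ?_
    have h1 : 0 < x/2 := by linarith [hx.1]
    have h2 : x/2 < π/2 := by linarith [hx.2]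
    have hs0 : 0 < Real.sin (x/2) := Real.sin_pos_of_pos_of_lt_pi h1 (by linarith [pi_pos])
    have hc0 : 0 < Real.cos (x/2) := Real.cos_pos_of_mem_Ioo ⟨by linarith [pi_pos], h2⟩
    simp only [smul_eq_mul, hf]
    rw [abs_of_pos (by positivity)]
    have e1 : (Real.sin (x/2) ^ (2:ℕ)) ^ ((u+1)/2 - 1) = Real.sin (x/2) ^ (u - 1) := by
      rw [← Real.rpow_natCast (Real.sin (x/2)) 2, ← Real.rpow_mul hs0.le]
      norm_num
      ring_nf
    have e2 : (1 - Real.sin (x/2) ^ (2:ℕ)) ^ ((1/2:ℝ) - 1) = Real.cos (x/2) ^ (-1 : ℝ) := by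
      rw [show (1 : ℝ) - Real.sin (x/2) ^ (2:ℕ) = Real.cos (x/2) ^ (2:ℕ) by
        rw [← Real.sin_sq_add_cos_sq (x/2)]; ring]
      rw [← Real.rpow_natCast (Real.cos (x/2)) 2, ← Real.rpow_mul hc0.le]
      norm_num
    rw [e1, e2, Real.rpow_neg_one]
    have h3 : Real.sin (x/2) * Real.sin (x/2) ^ (u-1) = Real.sin (x/2) ^ u := by
      calc Real.sin (x/2) * Real.sin (x/2) ^ (u-1)
          = Real.sin (x/2) ^ (1:ℝ) * Real.sin (x/2) ^ (u-1) := by rw [Real.rpow_one]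
        _ = Real.sin (x/2) ^ (1 + (u-1)) := (Real.rpow_add hs0 1 (u-1)).symm
        _ = Real.sin (x/2) ^ u := by ring_nf
    have h4 : Real.sin (x/2) * Real.cos (x/2) *
        (Real.sin (x/2) ^ (u-1) * (Real.cos (x/2))⁻¹) =
        Real.sin (x/2) * Real.sin (x/2) ^ (u-1) * (Real.cos (x/2) * (Real.cos (x/2))⁻¹) := by
      ring
    rw [h4, mul_inv_cancel₀ hc0.ne', mul_one, h3]
  · intro x hx
    have : HasDerivAt f (Real.sin (x/2) * Real.cos (x/2)) x := by
      have h := ((Real.hasDerivAt_sin (x/2)).comp x ((hasDerivAt_id x).div_const 2)).pow 2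
      refine h.congr_deriv ?_
      simp only [Function.comp_apply, id]
      ring
    exact this.hasDerivWithinAt
  · intro a ha b hb hab
    simp only [hf] at hab
    have ha2 : a/2 ∈ Set.Icc (-(π/2)) (π/2) := ⟨by linarith [ha.1, pi_pos], by linarith [ha.2]⟩
    have hb2 : b/2 ∈ Set.Icc (-(π/2)) (π/2) := ⟨by linarith [hb.1, pi_pos], by linarith [hb.2]⟩
    have hsa : 0 ≤ Real.sin (a/2) := Real.sin_nonneg_of_nonneg_of_le_pi (by linarith [ha.1]) (by linarith [ha.2, pi_pos])
    have hsb : 0 ≤ Real.sin (b/2) := Real.sin_nonneg_of_nonneg_of_le_pi (by linarith [hb.1]) (by linarith [hb.2, pi_pos])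
    have : Real.sin (a/2) = Real.sin (b/2) := by
      nlinarith [hab]
    have := Real.injOn_sin ha2 hb2 this
    linarith

theorem integral_cos_sin_half_rpow (u : ℝ) (hu : u > -1) :
    (∫ x in (0 : ℝ)..π, Real.cos (x / 2) ^ u) = 2 ^ (-u) * π * gbinom u (u / 2) ∧
    (∫ x in (0 : ℝ)..π, Real.sin (x / 2) ^ u) = 2 ^ (-u) * π * gbinom u (u / 2) := by
  have key : (∫ x in (0 : ℝ)..π, Real.sin (x / 2) ^ u) = 2 ^ (-u) * π * gbinom u (u / 2) := by
    rw [sin_int u, beta_val u hu]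
    have hdup := Real.Gamma_mul_Gamma_add_half ((u+1)/2)
    rw [show (u+1)/2 + 1/2 = u/2 + 1 by ring, show 2 * ((u+1)/2) = u + 1 by ring,
      show 1 - (u+1) = -u by ring] at hdup
    have hb : 0 < Real.Gamma (u/2 + 1) := Real.Gamma_pos_of_pos (by linarith)
    rw [gbinom, show u - u/2 + 1 = u/2 + 1 by ring]
    have hππ : √π * √π = π := Real.mul_self_sqrt pi_pos.le
    set A := Real.Gamma ((u+1)/2)
    set B := Real.Gamma (u/2 + 1)
    set C := Real.Gamma (u+1)
    rw [← mul_div_assoc, div_eq_div_iff hb.ne' (mul_pos hb hb).ne']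
    linear_combination (√π * B) * hdup + ((2:ℝ)^(-u) * C * B) * hππ
  refine ⟨?_, key⟩
  have hcos : (∫ x in (0 : ℝ)..π, Real.cos (x / 2) ^ u) =
      ∫ x in (0 : ℝ)..π, Real.sin (x / 2) ^ u := by
    have h := intervalIntegral.integral_comp_sub_left (a := (0:ℝ)) (b := π)
      (fun x => Real.sin (x / 2) ^ u) π
    simp only [sub_self, sub_zero] at h
    rw [← h]
    refine intervalIntegral.integral_congr fun x hx => ?_
    rw [show (π - x)/2 = π/2 - x/2 by ring, Real.sin_pi_div_two_sub]
  rw [hcos, key]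
end

section
/- Let m and n be nonnegative integers and let v > −1 be a real number. Then ∑_{k=0}^{n} (−1)^k · C(n,k) · 2^{−k−m} · B(2k+2m+v, (2k+2m+v)/2) · B(k+m+v, v/2)^{−1} equals ∑_{k=0}^{⌊m/2⌋} C(m,2k) · 2^{−n−2k} · C(2k+n, (2k+n)/2) · B((2k+n+v)/2, (2k+n)/2)^{−1} if n is even, and equals −∑_{k=1}^{⌈m/2⌉} C(m, 2k−1) · 2^{−n−2k+1} · C(2k+n−1, (2k+n−1)/2) · B((2k+n−1+v)/2, (2k+n−1)/2)^{−1} if n is odd. -/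
open Real Polynomial Finset

noncomputable def Bb (x y : ℝ) : ℝ := Real.Gamma x * Real.Gamma y / Real.Gamma (x + y)

lemma betaPascal {x y : ℝ} (hx : 0 < x) (hy : 0 < y) :
    Bb x y = Bb (x + 1) y + Bb x (y + 1) := by
  unfold Bb
  have hxy : 0 < x + y := by linarith
  have h1 : Real.Gamma (x + 1) = x * Real.Gamma x := Real.Gamma_add_one hx.ne'
  have h2 : Real.Gamma (y + 1) = y * Real.Gamma y := Real.Gamma_add_one hy.ne'
  have h3 : Real.Gamma (x + y + 1) = (x + y) * Real.Gamma (x + y) :=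
    Real.Gamma_add_one hxy.ne'
  have h4 : Real.Gamma (x + y) ≠ 0 := (Real.Gamma_pos_of_pos hxy).ne'
  have h5 : (x + y) ≠ 0 := hxy.ne'
  rw [show x + 1 + y = x + y + 1 by ring, show x + (y + 1) = x + y + 1 by ring, h1, h2, h3]
  field_simp

noncomputable def L (c : ℝ) (f : ℝ[X]) : ℝ := f.sum fun k a => a * Bb ((k : ℝ) + c) c
lemma L_zero (c : ℝ) : L c 0 = 0 := Polynomial.sum_zero_index _
lemma L_add (c : ℝ) (f g : ℝ[X]) : L c (f + g) = L c f + L c g :=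
  Polynomial.sum_add_index f g _ (fun n => by simp) (fun n a b => by ring)
lemma L_monomial (c : ℝ) (k : ℕ) (a : ℝ) : L c (monomial k a) = a * Bb ((k : ℝ) + c) c :=
  Polynomial.sum_monomial_index a _ (by simp)
lemma L_smul (c a : ℝ) (f : ℝ[X]) : L c (a • f) = a * L c f := by
  unfold L
  rw [Polynomial.sum_smul_index _ _ _ (fun n => by simp), Polynomial.sum_def,
    Polynomial.sum_def, Finset.mul_sum]
  exact Finset.sum_congr rfl (fun k _ => by ring)
lemma L_sub (c : ℝ) (f g : ℝ[X]) : L c (f - g) = L c f - L c g := by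
  have : f - g = f + (-1 : ℝ) • g := by simp [sub_eq_add_neg]
  rw [this, L_add, L_smul]; ring
lemma L_finset_sum (c : ℝ) {ι : Type*} (s : Finset ι) (F : ι → ℝ[X]) :
    L c (∑ i ∈ s, F i) = ∑ i ∈ s, L c (F i) := by
  classical
  induction s using Finset.induction_on with
  | empty => simp [L_zero]
  | insert _ _ h ih => rw [Finset.sum_insert h, Finset.sum_insert h, L_add, ih]
lemma L_C_mul_X_pow (c : ℝ) (k : ℕ) (a : ℝ) :
    L c (Polynomial.C a * X ^ k) = a * Bb ((k : ℝ) + c) c := by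
  rw [Polynomial.C_mul_X_pow_eq_monomial, L_monomial]

lemma L_transfer {c : ℝ} (hc : 0 < c) (f : ℝ[X]) :
    L c (X * (1 - X) * f) = L (c + 1) f := by
  induction f using Polynomial.induction_on' with
  | add p q hp hq => rw [mul_add, L_add, L_add, hp, hq]
  | monomial k a =>
    have hpoly : X * (1 - X) * (monomial k a) =
        monomial (k + 1) a - monomial (k + 2) a := by
      rw [← Polynomial.C_mul_X_pow_eq_monomial, ← Polynomial.C_mul_X_pow_eq_monomial,
        ← Polynomial.C_mul_X_pow_eq_monomial]
      ring
    rw [hpoly, L_sub, L_monomial, L_monomial, L_monomial]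
    have h1 : ((k : ℝ) + 1 + c) = ((k : ℝ) + c) + 1 := by ring
    have hx : (0 : ℝ) < (k : ℝ) + c + 1 := by positivity
    have hp := betaPascal hx hc
    push_cast
    rw [show ((k : ℝ) + 1 + c) = (k : ℝ) + c + 1 by ring,
      show ((k : ℝ) + 2 + c) = ((k : ℝ) + c + 1) + 1 by ring, hp]
    ring

lemma dup_base {c : ℝ} (hc : 0 < c) : Bb c c = (2 : ℝ) ^ (1 - 2 * c) * Bb (1 / 2) c := by
  unfold Bb
  have hd := Real.Gamma_mul_Gamma_add_half c
  have h1 : Real.Gamma (2 * c) ≠ 0 := (Real.Gamma_pos_of_pos (by linarith)).ne'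
  have h2 : Real.Gamma (c + 1 / 2) ≠ 0 := (Real.Gamma_pos_of_pos (by linarith)).ne'
  rw [Real.Gamma_one_half_eq, show c + c = 2 * c by ring, show (1 : ℝ) / 2 + c = c + 1 / 2 by ring,
    mul_div_assoc]
  field_simp
  rw [show (2 * c + 1) / 2 = c + 1 / 2 by ring]
  linear_combination hd

lemma Bb_add_one_left {c x : ℝ} (hc : 0 < c) (hx : 0 < x) :
    Bb (x + 1) c = Bb x c - Bb x (c + 1) := by
  have := betaPascal hx hc; linarith

lemma rpow_succ_aux (c : ℝ) : (2 : ℝ) ^ (1 - 2 * (c + 1)) = (2 : ℝ) ^ (1 - 2 * c) / 4 := by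
  rw [show 1 - 2 * (c + 1) = (1 - 2 * c) + (-2 : ℝ) by ring,
    Real.rpow_add (by norm_num : (0:ℝ) < 2),
    show (-2 : ℝ) = ((-2 : ℤ) : ℝ) by norm_num, Real.rpow_intCast]
  norm_num
  ring

lemma pow_split (p : ℕ) (g : ℝ[X]) :
    g ^ (p + 2) = g ^ p - (4 : ℝ) • (X * (1 - X) * g ^ p) + (g ^ 2 - 1 + (4:ℝ) • (X * (1-X))) * g ^ p := by
  rw [Polynomial.smul_eq_C_mul, Polynomial.smul_eq_C_mul]
  ring

lemma onesub_sq : ((1 : ℝ[X]) - 2 * X) ^ 2 - 1 + (4 : ℝ) • (X * (1 - X)) = 0 := by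
  rw [Polynomial.smul_eq_C_mul]
  have : (Polynomial.C (4:ℝ)) = 4 := by norm_cast
  rw [this]; ring

lemma pow_split' (p : ℕ) :
    ((1 : ℝ[X]) - 2 * X) ^ (p + 2) =
      ((1 : ℝ[X]) - 2 * X) ^ p - (4 : ℝ) • (X * (1 - X) * ((1 : ℝ[X]) - 2 * X) ^ p) := by
  rw [pow_split, onesub_sq, zero_mul, add_zero]

lemma L_pow_step {c : ℝ} (hc : 0 < c) (p : ℕ) :
    L c (((1 : ℝ[X]) - 2 * X) ^ (p + 2)) =
      L c (((1 : ℝ[X]) - 2 * X) ^ p) - 4 * L (c + 1) (((1 : ℝ[X]) - 2 * X) ^ p) := by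
  rw [pow_split', L_sub, L_smul, L_transfer hc]

lemma key_even : ∀ (p : ℕ) {c : ℝ}, 0 < c →
    L c (((1 : ℝ[X]) - 2 * X) ^ (2 * p)) = (2 : ℝ) ^ (1 - 2 * c) * Bb ((p : ℝ) + 1 / 2) c := by
  intro p
  induction p with
  | zero =>
    intro c hc
    have h1 : ((1 : ℝ[X]) - 2 * X) ^ (2 * 0) = Polynomial.C 1 * X ^ 0 := by norm_num
    rw [h1, L_C_mul_X_pow]
    push_cast
    rw [show (0 : ℝ) + c = c by ring]
    rw [dup_base hc]
    norm_num
  | succ p ih =>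
    intro c hc
    have h2 : 2 * (p + 1) = 2 * p + 2 := by ring
    rw [h2, L_pow_step hc, ih hc, ih (by linarith : (0:ℝ) < c + 1), rpow_succ_aux]
    have hx : (0 : ℝ) < (p : ℝ) + 1 / 2 := by positivity
    have hB := Bb_add_one_left hc hx
    push_cast
    rw [show ((p : ℝ) + 1 + 1 / 2) = ((p : ℝ) + 1 / 2) + 1 by ring, hB]
    ring

lemma key_odd : ∀ (p : ℕ) {c : ℝ}, 0 < c →
    L c (((1 : ℝ[X]) - 2 * X) ^ (2 * p + 1)) = 0 := by
  intro p
  induction p with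
  | zero =>
    intro c hc
    have h1 : ((1 : ℝ[X]) - 2 * X) ^ (2 * 0 + 1) = Polynomial.C 1 * X ^ 0 - Polynomial.C 2 * X ^ 1 := by
      rw [show (Polynomial.C (2:ℝ)) = 2 from map_ofNat _ 2]; norm_num
    rw [h1, L_sub, L_C_mul_X_pow, L_C_mul_X_pow]
    have h2 : Real.Gamma (1 + c) = c * Real.Gamma c := by
      rw [show (1 : ℝ) + c = c + 1 by ring]; exact Real.Gamma_add_one hc.ne'
    have h3 : Real.Gamma ((1 : ℝ) + c + c) = (c + c) * Real.Gamma (c + c) := by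
      rw [show (1 : ℝ) + c + c = (c + c) + 1 by ring]
      exact Real.Gamma_add_one (by linarith)
    unfold Bb
    push_cast
    rw [show (0 : ℝ) + c = c by ring, h2, h3]
    have h4 : Real.Gamma (c + c) ≠ 0 := (Real.Gamma_pos_of_pos (by linarith)).ne'
    field_simp
    ring
  | succ p ih =>
    intro c hc
    have h2 : 2 * (p + 1) + 1 = (2 * p + 1) + 2 := by ring
    rw [h2, L_pow_step hc, ih hc, ih (by linarith : (0:ℝ) < c + 1)]
    ring

lemma keyN (N : ℕ) {c : ℝ} (hc : 0 < c) :
    L c (((1 : ℝ[X]) - 2 * X) ^ N) =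
      if Even N then (2 : ℝ) ^ (1 - 2 * c) * Bb ((N : ℝ) / 2 + 1 / 2) c else 0 := by
  rcases Nat.even_or_odd N with ⟨p, hp⟩ | ⟨p, hp⟩
  · have hN : N = 2 * p := by omega
    subst hN
    rw [key_even p hc, if_pos ⟨p, by ring⟩]
    push_cast; ring_nf
  · subst hp
    rw [key_odd p hc, if_neg (by simp [Nat.even_add_one, Nat.even_mul])]

lemma stepA (v : ℝ) (hv : v > -1) (k m : ℕ) :
    (-1:ℝ)^k * (2:ℝ)^(-(k:ℝ) - (m:ℝ)) *
      gbinom (2*(k:ℝ) + 2*(m:ℝ) + v) ((2*(k:ℝ) + 2*(m:ℝ) + v)/2) *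
      (gbinom ((k:ℝ) + (m:ℝ) + v) (v/2))⁻¹
    = ((2:ℝ)^(2*((v+1)/2) - 1) * Real.Gamma (v/2+1) / (Real.sqrt π * Real.Gamma ((v+1)/2))) *
      ((2:ℝ)^m * ((-2:ℝ)^k * Bb ((k:ℝ)+(m:ℝ)+(v+1)/2) ((v+1)/2))) := by
  have hπ : Real.sqrt π ≠ 0 := by positivity
  set c : ℝ := (v+1)/2 with hcdef
  have hc : 0 < c := by rw [hcdef]; linarith
  set P : ℝ := (2:ℝ)^(2*c - 1) with hPdef
  have hP0 : 0 < P := Real.rpow_pos_of_pos (by norm_num) _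
  set Q : ℝ := (2:ℝ)^(k+m : ℕ) with hQdef
  have hQ0 : (0:ℝ) < Q := by positivity
  -- rpow reduction
  have hpow1 : (2:ℝ)^(-(k:ℝ) - (m:ℝ)) = Q⁻¹ := by
    rw [hQdef, ← Real.rpow_natCast 2 (k+m), ← Real.rpow_neg (by norm_num)]
    push_cast; ring_nf
  -- duplication
  have hd := Real.Gamma_mul_Gamma_add_half ((k:ℝ) + (m:ℝ) + c)
  have harg1 : (k:ℝ) + (m:ℝ) + c + 1/2 = (k:ℝ) + (m:ℝ) + v/2 + 1 := by rw [hcdef]; ring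
  have harg2 : 2*((k:ℝ) + (m:ℝ) + c) = 2*(k:ℝ) + 2*(m:ℝ) + v + 1 := by rw [hcdef]; ring
  have harg3 : (1:ℝ) - 2*((k:ℝ) + (m:ℝ) + c) = (-((k+m:ℕ):ℝ)) + (-((k+m:ℕ):ℝ)) + -(2*c-1) := by
    push_cast; ring
  have hpow2 : (2:ℝ)^((1:ℝ) - 2*((k:ℝ) + (m:ℝ) + c)) = (Q*Q*P)⁻¹ := by
    rw [harg3, Real.rpow_add (by norm_num : (0:ℝ) < 2), Real.rpow_add (by norm_num : (0:ℝ) < 2),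
      Real.rpow_neg (by norm_num), Real.rpow_neg (by norm_num),
      Real.rpow_natCast, mul_inv, mul_inv]
  rw [harg1, hpow2, harg2] at hd
  have hG2 : Real.Gamma ((k:ℝ) + (m:ℝ) + v/2 + 1) ≠ 0 :=
    (Real.Gamma_pos_of_pos (by push_cast; linarith [Nat.cast_nonneg (α := ℝ) k, Nat.cast_nonneg (α := ℝ) m])).ne'
  have hG3 : Real.Gamma ((k:ℝ) + (m:ℝ) + v + 1) ≠ 0 :=
    (Real.Gamma_pos_of_pos (by push_cast; linarith [Nat.cast_nonneg (α := ℝ) k, Nat.cast_nonneg (α := ℝ) m])).ne'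
  have hG5 : Real.Gamma c ≠ 0 := (Real.Gamma_pos_of_pos hc).ne'
  unfold gbinom Bb
  rw [hpow1]
  rw [show 2*(k:ℝ) + 2*(m:ℝ) + v - (2*(k:ℝ) + 2*(m:ℝ) + v)/2 + 1 = (k:ℝ) + (m:ℝ) + v/2 + 1 by ring,
    show (2*(k:ℝ) + 2*(m:ℝ) + v)/2 + 1 = (k:ℝ) + (m:ℝ) + v/2 + 1 by ring,
    show (k:ℝ) + (m:ℝ) + v - v/2 + 1 = (k:ℝ) + (m:ℝ) + v/2 + 1 by ring,
    show (k:ℝ) + (m:ℝ) + c + c = (k:ℝ) + (m:ℝ) + v + 1 by rw [hcdef]; ring]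
  set G0 : ℝ := Real.Gamma (2*(k:ℝ) + 2*(m:ℝ) + v + 1) with hG0def
  set G1 : ℝ := Real.Gamma ((k:ℝ) + (m:ℝ) + c) with hG1def
  set G2 : ℝ := Real.Gamma ((k:ℝ) + (m:ℝ) + v/2 + 1) with hG2def
  set G3 : ℝ := Real.Gamma ((k:ℝ) + (m:ℝ) + v + 1) with hG3def
  set G4 : ℝ := Real.Gamma (v/2 + 1) with hG4def
  set G5 : ℝ := Real.Gamma c with hG5def
  have hGd : G0 = G1 * G2 * (Q*Q*P) / Real.sqrt π := by
    rw [hd]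
    field_simp
  rw [hGd]
  have hQsplit : Q = (2:ℝ)^m * (2:ℝ)^k := by rw [hQdef, pow_add]; ring
  have hneg : (-2:ℝ)^k = (-1:ℝ)^k * 2^k := by rw [← neg_one_mul, mul_pow]
  rw [hQsplit, hneg]
  field_simp

lemma stepC (v : ℝ) (hv : v > -1) (q : ℕ) :
    ((2*q).choose q : ℝ) * (gbinom ((q:ℝ) + v/2) (q:ℝ))⁻¹ * ((2:ℝ)^(2*q))⁻¹
      = Real.Gamma (v/2+1) / (Real.sqrt π * Real.Gamma ((v+1)/2)) * Bb ((q:ℝ)+1/2) ((v+1)/2) := by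
  have hπ : Real.sqrt π ≠ 0 := by positivity
  set c : ℝ := (v+1)/2 with hcdef
  have hc : 0 < c := by rw [hcdef]; linarith
  have hq0 : (0:ℝ) ≤ (q:ℝ) := Nat.cast_nonneg q
  have h1 : ((2*q).choose q : ℝ) =
      Real.Gamma (((2*q : ℕ):ℝ) + 1) / (Real.Gamma ((q:ℝ)+1) * Real.Gamma ((q:ℝ)+1)) := by
    rw [Real.Gamma_nat_eq_factorial, Real.Gamma_nat_eq_factorial]
    have h := Nat.choose_mul_factorial_mul_factorial (show q ≤ 2*q by omega)
    rw [show 2*q-q = q by omega] at h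
    rw [eq_div_iff (by positivity)]
    push_cast [← h]
    ring
  have hd := Real.Gamma_mul_Gamma_add_half ((q:ℝ)+1/2)
  rw [show (q:ℝ)+1/2+1/2 = (q:ℝ)+1 by ring,
    show 2*((q:ℝ)+1/2) = ((2*q : ℕ):ℝ) + 1 by push_cast; ring,
    show (1:ℝ) - (((2*q : ℕ):ℝ) + 1) = -(((2*q : ℕ):ℝ)) by ring,
    Real.rpow_neg (by norm_num), Real.rpow_natCast] at hd
  -- hd : Γ(q+1/2) * Γ(q+1) = Γ(2q+1) * (2^(2q))⁻¹ * √π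
  have hGd : Real.Gamma (((2*q : ℕ):ℝ) + 1) =
      Real.Gamma ((q:ℝ)+1/2) * Real.Gamma ((q:ℝ)+1) * (2:ℝ)^(2*q) / Real.sqrt π := by
    rw [hd]; field_simp
  unfold gbinom Bb
  rw [h1, hGd,
    show (q:ℝ) + v/2 - (q:ℝ) + 1 = v/2 + 1 by ring,
    show (q:ℝ) + v/2 + 1 = (q:ℝ) + v/2 + 1 from rfl,
    show (q:ℝ) + 1/2 + c = (q:ℝ) + v/2 + 1 by rw [hcdef]; ring]
  have hGq1 : Real.Gamma ((q:ℝ)+1) ≠ 0 := (Real.Gamma_pos_of_pos (by linarith)).ne'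
  have hGqv : Real.Gamma ((q:ℝ) + v/2 + 1) ≠ 0 := (Real.Gamma_pos_of_pos (by linarith)).ne'
  have hGhalf : Real.Gamma ((q:ℝ) + 1/2) ≠ 0 := (Real.Gamma_pos_of_pos (by linarith)).ne'
  have hGc : Real.Gamma c ≠ 0 := (Real.Gamma_pos_of_pos hc).ne'
  set A := Real.Gamma ((q:ℝ)+1/2)
  set B := Real.Gamma ((q:ℝ)+1)
  set D := Real.Gamma ((q:ℝ)+v/2+1)
  set E := Real.Gamma (v/2+1)
  set F := Real.Gamma c
  field_simp

lemma L_C_mul (c a : ℝ) (f : ℝ[X]) : L c (Polynomial.C a * f) = a * L c f := by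
  rw [← Polynomial.smul_eq_C_mul, L_smul]

lemma hpoly2 (m n : ℕ) : (X:ℝ[X])^m * (1-2*X)^n
    = ∑ k ∈ range (n+1), Polynomial.C ((n.choose k : ℝ) * (-2)^k) * X^(m+k) := by
  rw [show ((1:ℝ[X]) - 2*X) = (-(2*X)) + 1 by ring, add_pow, Finset.mul_sum]
  refine Finset.sum_congr rfl fun k hk => ?_
  have h1 : -(2*(X:ℝ[X])) = Polynomial.C (-2:ℝ) * X := by
    rw [map_neg, map_ofNat]
    ring
  rw [h1, mul_pow, ← map_pow, one_pow, mul_one,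
    show ((n.choose k : ℝ[X])) = Polynomial.C ((n.choose k : ℝ)) from (Polynomial.C_eq_natCast _).symm,
    map_mul, pow_add]
  ring

lemma hpoly1 (m n : ℕ) : Polynomial.C ((2:ℝ)^m) * ((X:ℝ[X])^m * (1-2*X)^n)
    = ∑ j ∈ range (m+1), Polynomial.C ((-1:ℝ)^j * (m.choose j : ℝ)) * (1-2*X)^(n+j) := by
  have hb : Polynomial.C ((2:ℝ)^m) * (X:ℝ[X])^m = ((-(1-2*X)) + 1)^m := by
    rw [map_pow, map_ofNat]
    ring
  rw [← mul_assoc, hb, add_pow, Finset.sum_mul]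
  refine Finset.sum_congr rfl fun j hj => ?_
  rw [neg_pow, one_pow, mul_one, map_mul,
    show ((m.choose j : ℝ[X])) = Polynomial.C ((m.choose j : ℝ)) from (Polynomial.C_eq_natCast _).symm,
    map_pow, map_neg, map_one, pow_add]
  ring

lemma L_X_pow_mul (c : ℝ) (m n : ℕ) : L c ((X:ℝ[X])^m * (1-2*X)^n)
    = ∑ k ∈ range (n+1), (n.choose k : ℝ) * (-2)^k * Bb (((m+k:ℕ):ℝ) + c) c := by
  rw [hpoly2, L_finset_sum]
  exact Finset.sum_congr rfl fun k hk => L_C_mul_X_pow c (m+k) _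

lemma main_id {c : ℝ} (hc : 0 < c) (m n : ℕ) :
    (2:ℝ)^m * (∑ k ∈ range (n+1), (n.choose k:ℝ) * (-2)^k * Bb (((m+k:ℕ):ℝ)+c) c)
      = ∑ j ∈ range (m+1), (-1:ℝ)^j * (m.choose j:ℝ) *
          (if Even (n+j) then (2:ℝ)^(1-2*c) * Bb ((((n+j:ℕ)):ℝ)/2 + 1/2) c else 0) := by
  rw [← L_X_pow_mul, ← L_C_mul, hpoly1, L_finset_sum]
  refine Finset.sum_congr rfl fun j hj => ?_
  rw [L_C_mul, keyN (n+j) hc]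


lemma sum_even_reindex (m : ℕ) (g : ℕ → ℝ) :
    ∑ j ∈ range (m+1), (if Even j then g j else 0) = ∑ k ∈ range (m/2+1), g (2*k) := by
  rw [← Finset.sum_filter]
  apply Finset.sum_nbij' (i := fun j => j/2) (j := fun k => 2*k)
  · intro a ha
    simp only [Finset.mem_filter, Finset.mem_range, Nat.even_iff] at ha
    simp only [Finset.mem_range]
    omega
  · intro a ha
    simp only [Finset.mem_range] at ha
    simp only [Finset.mem_filter, Finset.mem_range, Nat.even_iff]
    omega
  · intro a ha
    simp only [Finset.mem_filter, Finset.mem_range, Nat.even_iff] at ha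
    omega
  · intro a ha
    omega
  · intro a ha
    simp only [Finset.mem_filter, Finset.mem_range, Nat.even_iff] at ha
    congr 1
    omega

lemma sum_odd_reindex (m : ℕ) (g : ℕ → ℝ) :
    ∑ j ∈ range (m+1), (if ¬ Even j then g j else 0) = ∑ k ∈ Icc 1 ((m+1)/2), g (2*k-1) := by
  rw [← Finset.sum_filter]
  apply Finset.sum_nbij' (i := fun j => (j+1)/2) (j := fun k => 2*k-1)
  · intro a ha
    simp only [Finset.mem_filter, Finset.mem_range, Nat.even_iff] at ha
    simp only [Finset.mem_Icc]
    omega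
  · intro a ha
    simp only [Finset.mem_Icc] at ha
    simp only [Finset.mem_filter, Finset.mem_range, Nat.even_iff]
    omega
  · intro a ha
    simp only [Finset.mem_filter, Finset.mem_range, Nat.even_iff] at ha
    omega
  · intro a ha
    simp only [Finset.mem_Icc] at ha
    omega
  · intro a ha
    simp only [Finset.mem_filter, Finset.mem_range, Nat.even_iff] at ha
    congr 1
    omega


theorem knuth_old_sum_generalization (m n : ℕ) (v : ℝ) (hv : v > -1) :
    ∑ k ∈ Finset.range (n + 1),
      (-1 : ℝ) ^ k * (n.choose k : ℝ) * (2 : ℝ) ^ (-(k : ℝ) - (m : ℝ)) *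
        gbinom (2 * (k : ℝ) + 2 * (m : ℝ) + v) ((2 * (k : ℝ) + 2 * (m : ℝ) + v) / 2) *
        (gbinom ((k : ℝ) + (m : ℝ) + v) (v / 2))⁻¹
    = if Even n then
        ∑ k ∈ Finset.range (m / 2 + 1),
          (m.choose (2 * k) : ℝ) * (2 : ℝ) ^ (-(n : ℝ) - 2 * (k : ℝ)) *
            ((2 * k + n).choose ((2 * k + n) / 2) : ℝ) *
            (gbinom ((2 * (k : ℝ) + (n : ℝ) + v) / 2) ((2 * (k : ℝ) + (n : ℝ)) / 2))⁻¹
      else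
        -∑ k ∈ Finset.Icc 1 ((m + 1) / 2),
          (m.choose (2 * k - 1) : ℝ) * (2 : ℝ) ^ (-(n : ℝ) - 2 * (k : ℝ) + 1) *
            ((2 * k + n - 1).choose ((2 * k + n - 1) / 2) : ℝ) *
            (gbinom ((2 * (k : ℝ) + (n : ℝ) - 1 + v) / 2)
              ((2 * (k : ℝ) + (n : ℝ) - 1) / 2))⁻¹ := by
  have hπ : Real.sqrt π ≠ 0 := by positivity
  have hc : 0 < (v+1)/2 := by linarith
  have hpowcancel : (2:ℝ)^(2*((v+1)/2) - 1) * (2:ℝ)^(1-2*((v+1)/2)) = 1 := by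
    rw [← Real.rpow_add (by norm_num : (0:ℝ) < 2),
      show (2*((v+1)/2) - 1) + (1-2*((v+1)/2)) = 0 by ring, Real.rpow_zero]
  have hLHS : ∑ k ∈ Finset.range (n + 1),
      (-1 : ℝ) ^ k * (n.choose k : ℝ) * (2 : ℝ) ^ (-(k : ℝ) - (m : ℝ)) *
        gbinom (2 * (k : ℝ) + 2 * (m : ℝ) + v) ((2 * (k : ℝ) + 2 * (m : ℝ) + v) / 2) *
        (gbinom ((k : ℝ) + (m : ℝ) + v) (v / 2))⁻¹
      = ((2:ℝ)^(2*((v+1)/2) - 1) * Real.Gamma (v/2+1) / (Real.sqrt π * Real.Gamma ((v+1)/2))) *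
        ((2:ℝ)^m * ∑ k ∈ range (n+1), (n.choose k:ℝ) * (-2)^k * Bb (((m+k:ℕ):ℝ)+(v+1)/2) ((v+1)/2)) := by
    rw [Finset.mul_sum, Finset.mul_sum]
    refine Finset.sum_congr rfl fun k hk => ?_
    have hA := stepA v hv k m
    rw [show (k:ℝ)+(m:ℝ)+(v+1)/2 = ((m+k:ℕ):ℝ)+(v+1)/2 by push_cast; ring] at hA
    linear_combination ((n.choose k : ℝ)) * hA
  rw [hLHS, main_id hc m n]
  by_cases hn : Even n
  · rw [if_pos hn]
    have hstep : ∀ j, (-1:ℝ)^j * (m.choose j:ℝ) *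
        (if Even (n+j) then (2:ℝ)^(1-2*((v+1)/2)) * Bb ((((n+j:ℕ)):ℝ)/2 + 1/2) ((v+1)/2) else 0)
        = (if Even j then (m.choose j:ℝ) *
            ((2:ℝ)^(1-2*((v+1)/2)) * Bb ((((n+j:ℕ)):ℝ)/2 + 1/2) ((v+1)/2)) else 0) := by
      intro j
      by_cases hj : Even j
      · rw [if_pos hj, if_pos ((Nat.even_add).mpr (iff_of_true hn hj)), hj.neg_one_pow]
        ring
      · rw [if_neg hj, if_neg (fun h => hj (((Nat.even_add).mp h).mp hn))]
        ring
    rw [Finset.sum_congr rfl fun j _ => hstep j,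
      sum_even_reindex m (fun j => (m.choose j:ℝ) *
        ((2:ℝ)^(1-2*((v+1)/2)) * Bb ((((n+j:ℕ)):ℝ)/2 + 1/2) ((v+1)/2))), Finset.mul_sum]
    refine Finset.sum_congr rfl fun k hk => ?_
    obtain ⟨p, hp⟩ := hn
    have hC := stepC v hv (k+p)
    have hnn : 2*k+n = 2*(k+p) := by omega
    rw [hnn, show (2*(k+p))/2 = k+p by omega,
      show (2*(k:ℝ)+(n:ℝ)+v)/2 = ((k+p:ℕ):ℝ) + v/2 by push_cast [hp]; ring,
      show (2*(k:ℝ)+(n:ℝ))/2 = ((k+p:ℕ):ℝ) by push_cast [hp]; ring,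
      show -(n:ℝ)-2*(k:ℝ) = -(((2*(k+p):ℕ)):ℝ) by push_cast [hp]; ring,
      Real.rpow_neg (by norm_num), Real.rpow_natCast,
      show (((n+2*k:ℕ)):ℝ)/2 + 1/2 = ((k+p:ℕ):ℝ) + 1/2 by push_cast [hp]; ring]
    linear_combination (-(m.choose (2*k) : ℝ)) * hC +
      ((m.choose (2*k):ℝ) * Bb (((k+p:ℕ):ℝ) + 1/2) ((v+1)/2) *
        (Real.Gamma (v/2+1) / (Real.sqrt π * Real.Gamma ((v+1)/2)))) * hpowcancel
  · rw [if_neg hn]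
    have hn' : Odd n := Nat.odd_iff.mpr (Nat.not_even_iff.mp hn)
    obtain ⟨p, hp⟩ := hn'
    have hstep : ∀ j, (-1:ℝ)^j * (m.choose j:ℝ) *
        (if Even (n+j) then (2:ℝ)^(1-2*((v+1)/2)) * Bb ((((n+j:ℕ)):ℝ)/2 + 1/2) ((v+1)/2) else 0)
        = -(if ¬ Even j then (m.choose j:ℝ) *
            ((2:ℝ)^(1-2*((v+1)/2)) * Bb ((((n+j:ℕ)):ℝ)/2 + 1/2) ((v+1)/2)) else 0) := by
      intro j
      by_cases hj : Even j
      · rw [if_neg (fun h => hn (((Nat.even_add).mp h).mpr hj)), if_neg (by simpa using hj)]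
        ring
      · have hoj : Odd j := Nat.odd_iff.mpr (Nat.not_even_iff.mp hj)
        rw [if_pos (by rw [Nat.even_add]; exact iff_of_false hn hj), if_pos hj, hoj.neg_one_pow]
        ring
    rw [Finset.sum_congr rfl fun j _ => hstep j, Finset.sum_neg_distrib,
      sum_odd_reindex m (fun j => (m.choose j:ℝ) *
        ((2:ℝ)^(1-2*((v+1)/2)) * Bb ((((n+j:ℕ)):ℝ)/2 + 1/2) ((v+1)/2))), mul_neg, neg_inj,
      Finset.mul_sum]
    refine Finset.sum_congr rfl fun k hk => ?_
    rw [Finset.mem_Icc] at hk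
    have hC := stepC v hv (k+p)
    have hnn : 2*k+n-1 = 2*(k+p) := by omega
    have hnj : n + (2*k-1) = 2*(k+p) := by omega
    rw [hnn, show (2*(k+p))/2 = k+p by omega, hnj,
      show (2*(k:ℝ)+(n:ℝ)-1+v)/2 = ((k+p:ℕ):ℝ) + v/2 by push_cast [hp]; ring,
      show (2*(k:ℝ)+(n:ℝ)-1)/2 = ((k+p:ℕ):ℝ) by push_cast [hp]; ring,
      show -(n:ℝ)-2*(k:ℝ)+1 = -(((2*(k+p):ℕ)):ℝ) by push_cast [hp]; ring,
      Real.rpow_neg (by norm_num), Real.rpow_natCast,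
      show (((2*(k+p):ℕ)):ℝ)/2 + 1/2 = ((k+p:ℕ):ℝ) + 1/2 by push_cast; ring]
    linear_combination (-(m.choose (2*k-1) : ℝ)) * hC +
      ((m.choose (2*k-1):ℝ) * Bb (((k+p:ℕ):ℝ) + 1/2) ((v+1)/2) *
        (Real.Gamma (v/2+1) / (Real.sqrt π * Real.Gamma ((v+1)/2)))) * hpowcancel
end

section
/- Let n be a nonnegative integer and let v > −1 be a real number. Then ∑_{k=0}^{n} (−1)^k · C(n,k) · 2^{−k} · B(2k+v, (2k+v)/2) · B(k+v, v/2)^{−1} equals 2^{−n} · C(n, n/2) · B((n+v)/2, v/2)^{−1} if n is even, and equals 0 if n is odd. -/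
open Real Finset

noncomputable def gg (v : ℝ) (k : ℕ) : ℝ :=
  Real.Gamma ((k : ℝ) + (v + 1) / 2) / Real.Gamma ((k : ℝ) + v + 1)

noncomputable def SS (n : ℕ) (v : ℝ) : ℝ :=
  ∑ k ∈ Finset.range (n + 1), ((n.choose k : ℝ) * ((-1 : ℝ) ^ k * 2 ^ k * gg v k))

lemma gamma_shift {x : ℝ} (hx : 0 < x) : Real.Gamma (x + 1) = x * Real.Gamma x :=
  Real.Gamma_add_one (ne_of_gt hx)

lemma sum_choose_succ' (n : ℕ) (f : ℕ → ℝ) :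
    ∑ i ∈ range (n + 2), ((n + 1).choose i : ℝ) * f i
      = ∑ i ∈ range (n + 1), (n.choose i : ℝ) * (f i + f (i + 1)) := by
  simpa [mul_add, Finset.sum_add_distrib] using
    Finset.sum_choose_succ_mul (R := ℝ) (fun i _ => f i) n

lemma gg_key (v : ℝ) (hv : v > -1) (k : ℕ) :
    gg v k + 2 * (-2 * gg v (k + 1)) + 4 * gg v (k + 2)
      = gg v k - 2 * (v + 1) * gg (v + 2) k := by
  have hx : (0 : ℝ) < (k : ℝ) + (v + 1) / 2 := by
    have : (0:ℝ) ≤ (k:ℝ) := Nat.cast_nonneg k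
    linarith
  have hy : (0 : ℝ) < (k : ℝ) + v + 1 := by
    have : (0:ℝ) ≤ (k:ℝ) := Nat.cast_nonneg k
    linarith
  have hG1 := Real.Gamma_pos_of_pos hx
  have hG2 := Real.Gamma_pos_of_pos hy
  simp only [gg]
  push_cast
  rw [show ((k : ℝ) + 1 + (v + 1) / 2) = ((k : ℝ) + (v + 1) / 2) + 1 by ring,
    show ((k : ℝ) + 1 + v + 1) = ((k : ℝ) + v + 1) + 1 by ring,
    show ((k : ℝ) + 2 + (v + 1) / 2) = (((k : ℝ) + (v + 1) / 2) + 1) + 1 by ring,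
    show ((k : ℝ) + 2 + v + 1) = (((k : ℝ) + v + 1) + 1) + 1 by ring,
    show ((k : ℝ) + (v + 2 + 1) / 2) = ((k : ℝ) + (v + 1) / 2) + 1 by ring,
    show ((k : ℝ) + (v + 2) + 1) = (((k : ℝ) + v + 1) + 1) + 1 by ring,
    gamma_shift (by linarith : (0:ℝ) < (k : ℝ) + (v+1)/2 + 1),
    gamma_shift (by linarith : (0:ℝ) < (k : ℝ) + v + 1 + 1),
    gamma_shift hx, gamma_shift hy]
  field_simp
  ring

lemma SS_rec (n : ℕ) (v : ℝ) (hv : v > -1) :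
    SS (n + 2) v = SS n v - 2 * (v + 1) * SS n (v + 2) := by
  set f : ℕ → ℝ := fun i => (-1 : ℝ) ^ i * 2 ^ i * gg v i with hf
  have h1 : SS (n + 2) v = ∑ i ∈ range (n + 2 + 1), ((n + 2).choose i : ℝ) * f i := rfl
  rw [h1, show n + 2 + 1 = (n + 1) + 2 by ring, sum_choose_succ' (n + 1)]
  have h2 : ∑ i ∈ range (n + 2), ((n + 1).choose i : ℝ) * (f i + f (i + 1))
      = ∑ i ∈ range (n + 1), (n.choose i : ℝ) * ((f i + f (i + 1)) + (f (i + 1) + f (i + 2))) :=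
    sum_choose_succ' n (fun i => f i + f (i + 1))
  rw [h2]
  have h3 : ∀ i : ℕ, (f i + f (i + 1)) + (f (i + 1) + f (i + 2))
      = (-1 : ℝ) ^ i * 2 ^ i * (gg v i - 2 * (v + 1) * gg (v + 2) i) := by
    intro i
    simp only [hf, pow_succ]
    linear_combination ((-1:ℝ) ^ i * 2 ^ i) * gg_key v hv i
  calc ∑ i ∈ range (n + 1), (n.choose i : ℝ) * ((f i + f (i + 1)) + (f (i + 1) + f (i + 2)))
      = ∑ i ∈ range (n + 1), ((n.choose i : ℝ) * ((-1 : ℝ) ^ i * 2 ^ i * gg v i)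
          - 2 * (v + 1) * ((n.choose i : ℝ) * ((-1 : ℝ) ^ i * 2 ^ i * gg (v + 2) i))) := by
        refine Finset.sum_congr rfl fun i _ => ?_
        rw [h3 i]; ring
    _ = SS n v - 2 * (v + 1) * SS n (v + 2) := by
        rw [Finset.sum_sub_distrib, ← Finset.mul_sum]; rfl

noncomputable def CF (n : ℕ) (v : ℝ) : ℝ :=
  if Even n then (2:ℝ)^(-(n:ℝ)-v) * Real.sqrt π * (n.choose (n/2) : ℝ)
      * (Nat.factorial (n/2) : ℝ) / Real.Gamma ((n:ℝ)/2 + v/2 + 1) else 0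

lemma SS_zero (v : ℝ) (hv : v > -1) : SS 0 v = CF 0 v := by
  have hd := Real.Gamma_mul_Gamma_add_half ((v+1)/2)
  rw [show (v+1)/2 + 1/2 = v/2 + 1 by ring, show 2*((v+1)/2) = v + 1 by ring,
      show (1:ℝ) - (v+1) = -v by ring] at hd
  have h1 : (0:ℝ) < Real.Gamma (v+1) := Real.Gamma_pos_of_pos (by linarith)
  have h2 : (0:ℝ) < Real.Gamma (v/2+1) := Real.Gamma_pos_of_pos (by linarith)
  have h3 : (0:ℝ) < Real.sqrt π := Real.sqrt_pos.mpr Real.pi_pos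
  have h4 : (0:ℝ) < (2:ℝ)^(-v) := Real.rpow_pos_of_pos two_pos _
  simp only [SS, gg, CF, Finset.sum_range_one, if_pos (Even.zero)]
  norm_num
  rw [div_eq_div_iff (ne_of_gt h1) (ne_of_gt h2)]
  linear_combination hd

lemma SS_one (v : ℝ) (hv : v > -1) : SS 1 v = CF 1 v := by
  have hx : (0:ℝ) < (v+1)/2 := by linarith
  have hy : (0:ℝ) < v + 1 := by linarith
  have hG1 := Real.Gamma_pos_of_pos hx
  have hG2 := Real.Gamma_pos_of_pos hy
  simp only [SS, gg, CF, Finset.sum_range_succ, Finset.sum_range_zero, if_neg Nat.not_even_one]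
  push_cast
  rw [show ((1:ℝ) + (v + 1)/2) = (v+1)/2 + 1 by ring, show ((1:ℝ) + v + 1) = (v+1) + 1 by ring,
    show ((0:ℝ) + (v + 1)/2) = (v+1)/2 by ring, show ((0:ℝ) + v + 1) = v+1 by ring,
    gamma_shift hx, gamma_shift hy]
  field_simp
  simp

lemma CF_rec (n : ℕ) (v : ℝ) (hv : v > -1) :
    CF (n+2) v = CF n v - 2 * (v + 1) * CF n (v + 2) := by
  by_cases hn : Even n
  · obtain ⟨m, rfl⟩ := hn
    have e1 : Even (m + m + 2) := ⟨m + 1, by ring⟩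
    have e0 : Even (m + m) := ⟨m, rfl⟩
    have d1 : (m + m) / 2 = m := by omega
    have d2 : (m + m + 2) / 2 = m + 1 := by omega
    have hc : ((m + m + 2).choose (m + 1) : ℝ) * ((m:ℝ) + 1)
        = 2 * (2 * (m:ℝ) + 1) * ((m + m).choose m : ℝ) := by
      have h := Nat.succ_mul_centralBinom_succ m
      unfold Nat.centralBinom at h
      rw [show 2*(m+1) = m+m+2 by ring, show 2*m = m+m by ring] at h
      have h2 := congrArg (Nat.cast : ℕ → ℝ) h
      push_cast at h2
      linarith [h2]
    have hr : (0:ℝ) < (m:ℝ) + v/2 + 1 := by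
      have : (0:ℝ) ≤ (m:ℝ) := Nat.cast_nonneg m
      linarith
    have hG := Real.Gamma_pos_of_pos hr
    have hX : (0:ℝ) < (2:ℝ)^(-((m:ℝ)+(m:ℝ))-v) := Real.rpow_pos_of_pos two_pos _
    have h3 : (0:ℝ) < Real.sqrt π := Real.sqrt_pos.mpr Real.pi_pos
    simp only [CF, if_pos e1, if_pos e0, d1, d2]
    push_cast [Nat.factorial_succ]
    rw [show (-((m:ℝ)+(m:ℝ)+2) - v) = (-((m:ℝ)+(m:ℝ)) - v) + (-2) by ring,
        show (-((m:ℝ)+(m:ℝ)) - (v+2)) = (-((m:ℝ)+(m:ℝ)) - v) + (-2) by ring]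
    simp only [Real.rpow_add (two_pos : (0:ℝ) < 2)]
    rw [show ((2:ℝ)^(-2:ℝ)) = 1/4 by
          rw [show ((-2:ℝ)) = ((-2:ℤ):ℝ) by norm_num, Real.rpow_intCast]; norm_num,
        show (((m:ℝ)+(m:ℝ)+2)/2 + v/2 + 1) = ((m:ℝ) + v/2 + 1) + 1 by ring,
        show (((m:ℝ)+(m:ℝ))/2 + (v+2)/2 + 1) = ((m:ℝ) + v/2 + 1) + 1 by ring,
        show (((m:ℝ)+(m:ℝ))/2 + v/2 + 1) = ((m:ℝ) + v/2 + 1) by ring,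
        gamma_shift hr]
    set r := (m:ℝ) + v/2 + 1 with hrdef
    set G := Real.Gamma r with hGdef
    set X := (2:ℝ)^(-((m:ℝ)+(m:ℝ))-v) with hXdef
    have hGne : G ≠ 0 := ne_of_gt hG
    have hrne : r ≠ 0 := ne_of_gt hr
    field_simp
    linear_combination hc
  · have h2 : ¬ Even (n + 2) := by simpa [Nat.even_add] using hn
    simp [CF, hn, h2]

lemma SS_eq (n : ℕ) : ∀ v : ℝ, v > -1 → SS n v = CF n v := by
  induction n using Nat.twoStepInduction with
  | zero => exact fun v hv => SS_zero v hv
  | one => exact fun v hv => SS_one v hv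
  | more n ih _ =>
    intro v hv
    rw [SS_rec n v hv, CF_rec n v hv, ih v hv, ih (v+2) (by linarith)]

lemma term_eq (n : ℕ) (v : ℝ) (hv : v > -1) (k : ℕ) :
    (-1 : ℝ) ^ k * (n.choose k : ℝ) * (2 : ℝ) ^ (-(k : ℝ)) *
        gbinom (2 * (k : ℝ) + v) ((2 * (k : ℝ) + v) / 2) * (gbinom ((k : ℝ) + v) (v / 2))⁻¹
    = ((2:ℝ)^v * Real.Gamma (v/2+1) / Real.sqrt π)
        * ((n.choose k : ℝ) * ((-1 : ℝ) ^ k * 2 ^ k * gg v k)) := by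
  have hk : (0:ℝ) ≤ (k:ℝ) := Nat.cast_nonneg k
  have hx : (0:ℝ) < (k:ℝ) + (v+1)/2 := by linarith
  have hy2 : (0:ℝ) < (k:ℝ) + v/2 + 1 := by linarith
  have hy : (0:ℝ) < (k:ℝ) + v + 1 := by linarith
  have hw : (0:ℝ) < v/2 + 1 := by linarith
  have hG1 := Real.Gamma_pos_of_pos hx
  have hG2 := Real.Gamma_pos_of_pos hy2
  have hG3 := Real.Gamma_pos_of_pos hy
  have hG4 := Real.Gamma_pos_of_pos hw
  have hs : (0:ℝ) < Real.sqrt π := Real.sqrt_pos.mpr Real.pi_pos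
  have hd := Real.Gamma_mul_Gamma_add_half ((k:ℝ) + (v+1)/2)
  rw [show ((k:ℝ) + (v+1)/2 + 1/2) = (k:ℝ) + v/2 + 1 by ring,
      show 2*((k:ℝ) + (v+1)/2) = 2*(k:ℝ) + v + 1 by ring,
      show (1:ℝ) - (2*(k:ℝ) + v + 1) = -(2*(k:ℝ)+v) by ring] at hd
  have hE : (0:ℝ) < (2:ℝ)^(-(2*(k:ℝ)+v)) := Real.rpow_pos_of_pos two_pos _
  have hv2 : (0:ℝ) < (2:ℝ)^v := Real.rpow_pos_of_pos two_pos _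
  have hk2 : (0:ℝ) < (2:ℝ)^((k:ℝ)) := Real.rpow_pos_of_pos two_pos _
  have hp : (2:ℝ)^(-(k:ℝ)) = (2:ℝ)^v * (2:ℝ)^((k:ℝ)) * (2:ℝ)^(-(2*(k:ℝ)+v)) := by
    rw [← Real.rpow_add two_pos, ← Real.rpow_add two_pos]
    congr 1; ring
  simp only [gbinom, gg]
  rw [show (2*(k:ℝ)+v)/2 + 1 = (k:ℝ) + v/2 + 1 by ring,
      show 2*(k:ℝ)+v - (2*(k:ℝ)+v)/2 + 1 = (k:ℝ) + v/2 + 1 by ring,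
      show (k:ℝ)+v - v/2 + 1 = (k:ℝ) + v/2 + 1 by ring,
      show (k:ℝ)+v+1 = (k:ℝ) + v + 1 by ring,
      hp, ← Real.rpow_natCast 2 k]
  set G1 := Real.Gamma ((k:ℝ) + (v+1)/2) with hd1
  set G2 := Real.Gamma ((k:ℝ) + v/2 + 1) with hd2
  set G3 := Real.Gamma ((k:ℝ) + v + 1) with hd3
  set G4 := Real.Gamma (v/2+1) with hd4
  set GG := Real.Gamma (2*(k:ℝ)+v+1) with hd5
  set E := (2:ℝ)^(-(2*(k:ℝ)+v)) with hd6
  set s := Real.sqrt π with hd7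
  field_simp
  linear_combination (-(n.choose k : ℝ)) * hd

theorem knuth_old_sum_gen_v (n : ℕ) (v : ℝ) (hv : v > -1) :
    ∑ k ∈ Finset.range (n + 1),
      (-1 : ℝ) ^ k * (n.choose k : ℝ) * (2 : ℝ) ^ (-(k : ℝ)) *
        gbinom (2 * (k : ℝ) + v) ((2 * (k : ℝ) + v) / 2) * (gbinom ((k : ℝ) + v) (v / 2))⁻¹
    = if Even n then
        (2 : ℝ) ^ (-(n : ℝ)) * (n.choose (n / 2) : ℝ) * (gbinom (((n : ℝ) + v) / 2) (v / 2))⁻¹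
      else 0 := by
  have hsum : ∑ k ∈ Finset.range (n + 1),
      (-1 : ℝ) ^ k * (n.choose k : ℝ) * (2 : ℝ) ^ (-(k : ℝ)) *
        gbinom (2 * (k : ℝ) + v) ((2 * (k : ℝ) + v) / 2) * (gbinom ((k : ℝ) + v) (v / 2))⁻¹
      = ((2:ℝ)^v * Real.Gamma (v/2+1) / Real.sqrt π) * SS n v := by
    rw [SS, Finset.mul_sum]
    exact Finset.sum_congr rfl fun k _ => term_eq n v hv k
  rw [hsum, SS_eq n v hv]
  by_cases hn : Even n
  · rw [CF, if_pos hn, if_pos hn]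
    obtain ⟨m, rfl⟩ := hn
    have d1 : (m + m) / 2 = m := by omega
    have hw : (0:ℝ) < v/2 + 1 := by linarith
    have hr : (0:ℝ) < (m:ℝ) + v/2 + 1 := by
      have : (0:ℝ) ≤ (m:ℝ) := Nat.cast_nonneg m
      linarith
    have hG4 := Real.Gamma_pos_of_pos hw
    have hG := Real.Gamma_pos_of_pos hr
    have hs : (0:ℝ) < Real.sqrt π := Real.sqrt_pos.mpr Real.pi_pos
    have hX : (0:ℝ) < (2:ℝ)^(-((m:ℝ)+(m:ℝ))-v) := Real.rpow_pos_of_pos two_pos _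
    have hv2 : (0:ℝ) < (2:ℝ)^v := Real.rpow_pos_of_pos two_pos _
    simp only [gbinom, d1]
    push_cast
    rw [show (((m:ℝ)+(m:ℝ)+v)/2 + 1) = (m:ℝ) + v/2 + 1 by ring,
        show (((m:ℝ)+(m:ℝ)+v)/2 - v/2 + 1) = (m:ℝ) + 1 by ring,
        Real.Gamma_nat_eq_factorial m,
        show (((m:ℝ)+(m:ℝ))/2 + v/2 + 1) = (m:ℝ) + v/2 + 1 by ring]
    have hf : (0:ℝ) < (Nat.factorial m : ℝ) := by positivity
    set G4 := Real.Gamma (v/2+1) with hd4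
    set G := Real.Gamma ((m:ℝ) + v/2 + 1) with hd5
    set s := Real.sqrt π with hd7
    set X := (2:ℝ)^(-((m:ℝ)+(m:ℝ)) - v) with hd8
    have hXX : X * (2:ℝ)^v = (2:ℝ)^(-((m:ℝ)+(m:ℝ))) := by
      rw [hd8, ← Real.rpow_add two_pos]
      congr 1; ring
    rw [← hXX]
    field_simp
  · simp only [CF, if_neg hn, mul_zero]
end

section
/- Let n be a nonnegative integer and let v > −1 be a real number. Then ∑_{k=0}^{⌊n/2⌋} C(n, 2k) · 2^{−2k} · C(2k, k) · B((2k+v)/2, k)^{−1} = 2^{−n} · B(2n+v, (2n+v)/2) · B(n+v, v/2)^{−1}. -/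
open Real

section helpers
open Finset Nat

noncomputable def pr (x : ℝ) (k : ℕ) : ℝ := ∏ i ∈ Finset.range k, (x + i)

noncomputable def ffr (x : ℝ) (k : ℕ) : ℝ := ∏ i ∈ Finset.range k, (x - i)

lemma pr_zero (x : ℝ) : pr x 0 = 1 := by simp [pr]

lemma pr_succ (x : ℝ) (k : ℕ) : pr x (k+1) = pr x k * (x + k) := by
  simp [pr, Finset.prod_range_succ]

lemma pr_succ' (x : ℝ) (k : ℕ) : pr x (k+1) = x * pr (x+1) k := by
  rw [pr, Finset.prod_range_succ']
  simp only [Nat.cast_zero, add_zero, pr]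
  rw [mul_comm]
  congr 1
  apply Finset.prod_congr rfl
  intro i _
  push_cast
  ring

lemma pr_pos {x : ℝ} (hx : 0 < x) (k : ℕ) : 0 < pr x k := by
  apply Finset.prod_pos
  intro i _
  positivity

lemma pr_ne_zero {x : ℝ} (hx : 0 < x) (k : ℕ) : pr x k ≠ 0 := (pr_pos hx k).ne'

lemma Gamma_pr {x : ℝ} (hx : 0 < x) (k : ℕ) : Real.Gamma (x + k) = pr x k * Real.Gamma x := by
  induction k with
  | zero => simp [pr_zero]
  | succ k ih =>
    have : x + (k+1 : ℕ) = (x + k) + 1 := by push_cast; ring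
    rw [this, Real.Gamma_add_one (by positivity), ih, pr_succ]
    ring

lemma CV (m : ℕ) : ∀ b c : ℝ, 0 < c →
    ∑ k ∈ Finset.range (m+1), (-1:ℝ)^k * (m.choose k : ℝ) * pr b k / pr c k
      = pr (c-b) m / pr c m := by
  induction m with
  | zero => intro b c hc; simp [pr_zero]
  | succ m ih =>
    intro b c hc
    have hc1 : (0:ℝ) < c + 1 := by linarith
    have key : ∀ k : ℕ, (-1:ℝ)^(k+1) * ((m+1).choose (k+1) : ℝ) * pr b (k+1) / pr c (k+1)
        = (-1:ℝ)^(k+1) * (m.choose k : ℝ) * pr b (k+1) / pr c (k+1)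
          + (-1:ℝ)^(k+1) * (m.choose (k+1) : ℝ) * pr b (k+1) / pr c (k+1) := by
      intro k
      rw [Nat.choose_succ_succ]
      push_cast
      ring
    rw [Finset.sum_range_succ' _ (m+1)]
    simp only [key]
    rw [Finset.sum_add_distrib]
    have h1 : ∑ k ∈ Finset.range (m+1),
        (-1:ℝ)^(k+1) * (m.choose (k+1) : ℝ) * pr b (k+1) / pr c (k+1)
        + (-1:ℝ)^0 * ((m+1).choose 0 : ℝ) * pr b 0 / pr c 0
        = ∑ k ∈ Finset.range (m+1), (-1:ℝ)^k * (m.choose k : ℝ) * pr b k / pr c k := by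
      rw [Finset.sum_range_succ' (fun k => (-1:ℝ)^k * (m.choose k : ℝ) * pr b k / pr c k) m]
      rw [Finset.sum_range_succ]
      simp [Nat.choose_succ_self]
    have h2 : ∑ k ∈ Finset.range (m+1),
        (-1:ℝ)^(k+1) * (m.choose k : ℝ) * pr b (k+1) / pr c (k+1)
        = -(b/c) * ∑ k ∈ Finset.range (m+1),
            (-1:ℝ)^k * (m.choose k : ℝ) * pr (b+1) k / pr (c+1) k := by
      rw [Finset.mul_sum]
      apply Finset.sum_congr rfl
      intro k _
      rw [pr_succ', pr_succ']
      have := pr_ne_zero hc1 k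
      field_simp
      ring
    rw [add_assoc, h1, h2, ih b c hc, ih (b+1) (c+1) hc1]
    have e1 : c + 1 - (b+1) = c - b := by ring
    rw [e1, pr_succ (c-b) m, pr_succ c m]
    have hp1 := pr_ne_zero hc1 m
    have hp := pr_ne_zero hc m
    have hrel : pr c m * (c + m) = c * pr (c+1) m := by
      rw [← pr_succ, ← pr_succ']
    have hcm : (c + (m:ℝ)) ≠ 0 := by positivity
    field_simp
    linear_combination (-(b * pr (c-b) m)) * hrel

lemma ffr_succ (x : ℝ) (k : ℕ) : ffr x (k+1) = ffr x k * (x - k) := by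
  simp [ffr, Finset.prod_range_succ]

lemma fact_eq {n : ℕ} : ∀ {j : ℕ}, j ≤ n → (n ! : ℝ) = ffr n j * ((n - j)! : ℕ) := by
  intro j
  induction j with
  | zero => simp [ffr]
  | succ j ih =>
    intro h
    have hj : j ≤ n := le_of_lt h
    have h1 : n - j = (n - (j+1)) + 1 := by omega
    rw [ih hj, h1, Nat.factorial_succ, ffr_succ]
    have h2 : ((n - (j+1) + 1 : ℕ) : ℝ) = (n : ℝ) - j := by
      have : ((n - (j+1) + 1 : ℕ) : ℝ) = ((n - j : ℕ) : ℝ) := by rw [← h1]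
      rw [this, Nat.cast_sub hj]
    push_cast
    push_cast at h2
    rw [h2]
    ring

lemma choose_mul_fact {n k : ℕ} (h : k ≤ n) : (n.choose k : ℝ) * (k ! : ℕ) = ffr n k := by
  have := Nat.cast_choose ℝ h
  rw [this, fact_eq h]
  have h1 : ((k ! : ℕ) : ℝ) ≠ 0 := by positivity
  have h2 : (((n-k) ! : ℕ) : ℝ) ≠ 0 := by positivity
  field_simp

lemma ffr_pair (x : ℝ) (k : ℕ) :
    ffr x (2*k) = ∏ j ∈ Finset.range k, ((x - 2*j) * (x - 2*j - 1)) := by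
  induction k with
  | zero => simp [ffr]
  | succ k ih =>
    have : 2*(k+1) = (2*k) + 1 + 1 := by ring
    rw [this, ffr, Finset.prod_range_succ, Finset.prod_range_succ, ← ffr, ih,
      Finset.prod_range_succ]
    push_cast
    ring

lemma gbinom_term (v : ℝ) (hv : v > -1) (k : ℕ) :
    gbinom ((2*(k:ℝ) + v)/2) (k:ℝ) = pr (v/2+1) k / (k.factorial : ℝ) := by
  have hc : (0:ℝ) < v/2 + 1 := by linarith
  have e1 : (2*(k:ℝ) + v)/2 + 1 = (v/2 + 1) + k := by ring
  have e2 : (2*(k:ℝ) + v)/2 - k + 1 = v/2 + 1 := by ring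
  rw [gbinom, e1, e2, Gamma_pr hc, Real.Gamma_nat_eq_factorial]
  have hg : Real.Gamma (v/2+1) ≠ 0 := (Real.Gamma_pos_of_pos hc).ne'
  rw [mul_div_mul_right _ _ hg]

lemma rpow_neg_two_k (k : ℕ) : (2:ℝ) ^ (-2*(k:ℝ)) = ((4:ℝ)^k)⁻¹ := by
  have e1 : (-2*(k:ℝ)) = -((2*k : ℕ) : ℝ) := by push_cast; ring
  rw [e1, Real.rpow_neg (by norm_num), Real.rpow_natCast, pow_mul]
  norm_num

lemma term_eq_s6 {n m k : ℕ} {b c : ℝ} (hk : 2*k ≤ n) (hkm : k ≤ m) (hc : pr c k ≠ 0)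
    (hfac : ∀ j : ℕ, ((n:ℝ) - 2*j) * ((n:ℝ) - 2*j - 1) = -4 * ((m:ℝ) - j) * (b + j)) :
    (n.choose (2*k) : ℝ) * ((4:ℝ)^k)⁻¹ * ((2*k).choose k : ℝ) * ((k.factorial : ℝ) / pr c k)
      = (-1:ℝ)^k * (m.choose k : ℝ) * pr b k / pr c k := by
  have key : ffr (n:ℝ) (2*k) = (-1:ℝ)^k * ffr (m:ℝ) k * 4^k * pr b k := by
    rw [ffr_pair]
    have expand : ((-1:ℝ)^k * ffr (m:ℝ) k * 4^k * pr b k)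
        = ∏ j ∈ Finset.range k, ((-4:ℝ) * ((m:ℝ) - j) * (b + j)) := by
      simp only [Finset.prod_mul_distrib, Finset.prod_const, Finset.card_range, ffr, pr]
      rw [show (-4:ℝ) = (-1)*4 by norm_num, mul_pow]
      ring
    rw [expand]
    apply Finset.prod_congr rfl
    intro j _
    rw [hfac j]
  have hnat : ((2*k).choose k : ℝ) * k.factorial * k.factorial = ((2*k).factorial : ℝ) := by
    have h := Nat.choose_mul_factorial_mul_factorial (show k ≤ 2*k by omega)
    rw [show 2*k - k = k by omega] at h
    exact_mod_cast h
  have h1 : (n.choose (2*k) : ℝ) * ((2*k).factorial) = ffr n (2*k) := choose_mul_fact hk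
  have h3 : ((m.choose k : ℝ)) * k.factorial = ffr m k := choose_mul_fact hkm
  have hfk : ((k.factorial:ℝ)) ≠ 0 := by positivity
  have h4 : ((4:ℝ)^k) ≠ 0 := by positivity
  have E : (n.choose (2*k) : ℝ) * ((2*k).choose k) * k.factorial
      = (-1:ℝ)^k * (m.choose k) * (4^k) * pr b k := by
    have step : (n.choose (2*k) : ℝ) * ((2*k).choose k) * k.factorial * k.factorial
        = ((-1:ℝ)^k * (m.choose k) * (4^k) * pr b k) * k.factorial := by
      calc (n.choose (2*k) : ℝ) * ((2*k).choose k) * k.factorial * k.factorial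
          = (n.choose (2*k):ℝ) * (((2*k).choose k : ℝ) * k.factorial * k.factorial) := by ring
        _ = (n.choose (2*k):ℝ) * ((2*k).factorial) := by rw [hnat]
        _ = ffr n (2*k) := h1
        _ = (-1:ℝ)^k * ffr m k * 4^k * pr b k := key
        _ = _ := by rw [← h3]; ring
    exact mul_right_cancel₀ hfk step
  have goal1 : (n.choose (2*k) : ℝ) * ((4:ℝ)^k)⁻¹ * ((2*k).choose k : ℝ)
      * ((k.factorial : ℝ) / pr c k)
      = ((n.choose (2*k) : ℝ) * ((2*k).choose k) * k.factorial) * ((4:ℝ)^k)⁻¹ / pr c k := by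
    ring
  rw [goal1, E]
  field_simp

lemma rhs_eq (v : ℝ) (hv : v > -1) (n : ℕ) :
    (2:ℝ)^(-(n:ℝ)) * gbinom (2*(n:ℝ)+v) ((2*(n:ℝ)+v)/2) * (gbinom ((n:ℝ)+v) (v/2))⁻¹
    = Real.Gamma (v/2+1) * Real.Gamma ((n:ℝ) + v/2 + 1/2)
      / (Real.Gamma ((n:ℝ)/2 + v/2 + 1/2) * Real.Gamma ((n:ℝ)/2 + v/2 + 1)) := by
  have hn0 : (0:ℝ) ≤ (n:ℝ) := Nat.cast_nonneg n
  have ha : (0:ℝ) < v/2 + 1/2 := by linarith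
  set s1 : ℝ := (n:ℝ) + v/2 + 1/2 with hs1
  set s2 : ℝ := (n:ℝ)/2 + v/2 + 1/2 with hs2
  have hs1p : 0 < s1 := by rw [hs1]; linarith
  have hs2p : 0 < s2 := by rw [hs2]; linarith
  have hs1p' : 0 < s1 + 1/2 := by linarith
  have hs2p' : 0 < s2 + 1/2 := by linarith
  have hvp : (0:ℝ) < v/2 + 1 := by linarith
  have hpi : (0:ℝ) < √π := Real.sqrt_pos.mpr Real.pi_pos
  have hp1 : (0:ℝ) < (2:ℝ)^(1-2*s1) := Real.rpow_pos_of_pos two_pos _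
  have hp2 : (0:ℝ) < (2:ℝ)^(1-2*s2) := Real.rpow_pos_of_pos two_pos _
  have d1 := Real.Gamma_mul_Gamma_add_half s1
  have d2 := Real.Gamma_mul_Gamma_add_half s2
  have hG1 : Real.Gamma (2*s1)
      = Real.Gamma s1 * Real.Gamma (s1+1/2) / ((2:ℝ)^(1-2*s1) * √π) := by
    rw [eq_div_iff (by positivity)]
    linear_combination -d1
  have hG2 : Real.Gamma (2*s2)
      = Real.Gamma s2 * Real.Gamma (s2+1/2) / ((2:ℝ)^(1-2*s2) * √π) := by
    rw [eq_div_iff (by positivity)]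
    linear_combination -d2
  have h2n : (2:ℝ)^(-(n:ℝ)) = (2:ℝ)^(1-2*s1) / (2:ℝ)^(1-2*s2) := by
    rw [← Real.rpow_sub two_pos]
    congr 1
    rw [hs1, hs2]
    ring
  rw [gbinom, gbinom]
  rw [show 2*(n:ℝ)+v+1 = 2*s1 by rw [hs1]; ring]
  rw [show (2*(n:ℝ)+v)/2+1 = s1 + 1/2 by rw [hs1]; ring]
  rw [show 2*(n:ℝ)+v-(2*(n:ℝ)+v)/2+1 = s1+1/2 by rw [hs1]; ring]
  rw [show (n:ℝ)+v+1 = 2*s2 by rw [hs2]; ring]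
  rw [show (n:ℝ)+v-v/2+1 = s1+1/2 by rw [hs1]; ring]
  rw [show (n:ℝ)/2+v/2+1 = s2+1/2 by rw [hs2]; ring]
  rw [hG1, hG2, h2n]
  have g1 := (Real.Gamma_pos_of_pos hs1p).ne'
  have g2 := (Real.Gamma_pos_of_pos hs1p').ne'
  have g3 := (Real.Gamma_pos_of_pos hs2p).ne'
  have g4 := (Real.Gamma_pos_of_pos hs2p').ne'
  have g5 := (Real.Gamma_pos_of_pos hvp).ne'
  field_simp

end helpers

theorem even_index_sum_identity (n : ℕ) (v : ℝ) (hv : v > -1) :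
    ∑ k ∈ Finset.range (n / 2 + 1),
      (n.choose (2 * k) : ℝ) * (2 : ℝ) ^ (-2 * (k : ℝ)) * ((2 * k).choose k : ℝ) *
        (gbinom ((2 * (k : ℝ) + v) / 2) (k : ℝ))⁻¹
    = (2 : ℝ) ^ (-(n : ℝ)) * gbinom (2 * (n : ℝ) + v) ((2 * (n : ℝ) + v) / 2) *
        (gbinom ((n : ℝ) + v) (v / 2))⁻¹ := by
  have hc : (0:ℝ) < v/2 + 1 := by linarith
  have hcG := (Real.Gamma_pos_of_pos hc).ne'
  rcases Nat.even_or_odd n with ⟨m, rfl⟩ | ⟨m, rfl⟩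
  · -- even case : n = m + m
    have hm2 : (m+m)/2 = m := by omega
    rw [hm2]
    have hstep : ∀ k ∈ Finset.range (m+1),
        ((m+m).choose (2 * k) : ℝ) * (2 : ℝ) ^ (-2 * (k : ℝ)) * ((2 * k).choose k : ℝ) *
          (gbinom ((2 * (k : ℝ) + v) / 2) (k : ℝ))⁻¹
        = (-1:ℝ)^k * (m.choose k : ℝ) * pr (1/2 - (m:ℝ)) k / pr (v/2+1) k := by
      intro k hk
      rw [Finset.mem_range] at hk
      have hkm : k ≤ m := by omega
      have h2k : 2*k ≤ m+m := by omega
      rw [gbinom_term v hv k, rpow_neg_two_k, inv_div]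
      refine term_eq_s6 h2k hkm (pr_ne_zero hc k) ?_
      intro j
      push_cast
      ring
    rw [Finset.sum_congr rfl hstep, CV m (1/2 - (m:ℝ)) (v/2+1) hc,
      rhs_eq v hv (m+m)]
    have hmp : (0:ℝ) < (m:ℝ) + v/2 + 1/2 := by
      have : (0:ℝ) ≤ (m:ℝ) := Nat.cast_nonneg m
      linarith
    rw [show ((m+m:ℕ):ℝ) + v/2 + 1/2 = ((m:ℝ) + v/2 + 1/2) + m by push_cast; ring,
      Gamma_pr hmp m,
      show ((m+m:ℕ):ℝ)/2 + v/2 + 1 = (v/2 + 1) + m by push_cast; ring,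
      Gamma_pr hc m,
      show ((m+m:ℕ):ℝ)/2 + v/2 + 1/2 = (m:ℝ) + v/2 + 1/2 by push_cast; ring,
      show v/2 + 1 - (1/2 - (m:ℝ)) = (m:ℝ) + v/2 + 1/2 by ring]
    have g1 := (Real.Gamma_pos_of_pos hmp).ne'
    rw [show Real.Gamma (v/2+1) * (pr ((m:ℝ)+v/2+1/2) m * Real.Gamma ((m:ℝ)+v/2+1/2))
          = pr ((m:ℝ)+v/2+1/2) m * (Real.Gamma ((m:ℝ)+v/2+1/2) * Real.Gamma (v/2+1)) from by
        ring,
      show Real.Gamma ((m:ℝ)+v/2+1/2) * (pr (v/2+1) m * Real.Gamma (v/2+1))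
          = pr (v/2+1) m * (Real.Gamma ((m:ℝ)+v/2+1/2) * Real.Gamma (v/2+1)) from by ring,
      mul_div_mul_right _ _ (mul_ne_zero g1 hcG)]
  · -- odd case : n = 2*m + 1
    have hm2 : (2*m+1)/2 = m := by omega
    rw [hm2]
    have hstep : ∀ k ∈ Finset.range (m+1),
        ((2*m+1).choose (2 * k) : ℝ) * (2 : ℝ) ^ (-2 * (k : ℝ)) * ((2 * k).choose k : ℝ) *
          (gbinom ((2 * (k : ℝ) + v) / 2) (k : ℝ))⁻¹
        = (-1:ℝ)^k * (m.choose k : ℝ) * pr (-(m:ℝ) - 1/2) k / pr (v/2+1) k := by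
      intro k hk
      rw [Finset.mem_range] at hk
      have hkm : k ≤ m := by omega
      have h2k : 2*k ≤ 2*m+1 := by omega
      rw [gbinom_term v hv k, rpow_neg_two_k, inv_div]
      refine term_eq_s6 h2k hkm (pr_ne_zero hc k) ?_
      intro j
      push_cast
      ring
    rw [Finset.sum_congr rfl hstep, CV m (-(m:ℝ) - 1/2) (v/2+1) hc,
      rhs_eq v hv (2*m+1)]
    have hmp : (0:ℝ) < (m:ℝ) + v/2 + 3/2 := by
      have : (0:ℝ) ≤ (m:ℝ) := Nat.cast_nonneg m
      linarith
    rw [show ((2*m+1:ℕ):ℝ) + v/2 + 1/2 = ((m:ℝ) + v/2 + 3/2) + m by push_cast; ring,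
      Gamma_pr hmp m,
      show ((2*m+1:ℕ):ℝ)/2 + v/2 + 1/2 = (v/2 + 1) + m by push_cast; ring,
      Gamma_pr hc m,
      show ((2*m+1:ℕ):ℝ)/2 + v/2 + 1 = (m:ℝ) + v/2 + 3/2 by push_cast; ring,
      show v/2 + 1 - (-(m:ℝ) - 1/2) = (m:ℝ) + v/2 + 3/2 by ring]
    have g1 := (Real.Gamma_pos_of_pos hmp).ne'
    rw [show Real.Gamma (v/2+1) * (pr ((m:ℝ)+v/2+3/2) m * Real.Gamma ((m:ℝ)+v/2+3/2))
          = pr ((m:ℝ)+v/2+3/2) m * (Real.Gamma ((m:ℝ)+v/2+3/2) * Real.Gamma (v/2+1)) from by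
        ring,
      show pr (v/2+1) m * Real.Gamma (v/2+1) * Real.Gamma ((m:ℝ)+v/2+3/2)
          = pr (v/2+1) m * (Real.Gamma ((m:ℝ)+v/2+3/2) * Real.Gamma (v/2+1)) from by ring,
      mul_div_mul_right _ _ (mul_ne_zero g1 hcG)]
end

section
/- Let n be a nonnegative integer and let v > −1 be a real number. Then ∑_{k=1}^{⌈n/2⌉} C(n, 2k−1) · 2^{n−2k} · C(2k, k) · B((2k+v)/2, k)^{−1} = (1/2) · B(2n+v+2, (2n+v+2)/2) · B(n+v+1, v/2)^{−1} − B(2n+v, (2n+v)/2) · B(n+v, v/2)^{−1}. -/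
open Real Finset

namespace OddIdxAux

lemma choose_cast_rel (n j : ℕ) :
    (n.choose (j+1) : ℝ) * ((j:ℝ)+1) = (n.choose j : ℝ) * ((n:ℝ) - j) := by
  rcases le_or_gt j n with h | h
  · have h1 := Nat.choose_succ_right_eq n j
    calc (n.choose (j+1) : ℝ) * ((j:ℝ)+1) = ((n.choose (j+1) * (j+1) : ℕ) : ℝ) := by
          push_cast; ring
      _ = ((n.choose j * (n - j) : ℕ) : ℝ) := by rw [h1]
      _ = (n.choose j : ℝ) * ((n:ℝ) - j) := by push_cast [Nat.cast_sub h]; ring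
  · rw [Nat.choose_eq_zero_of_lt h, Nat.choose_eq_zero_of_lt (Nat.lt_succ_of_lt h)]
    simp

/-- telescoping certificate function -/
noncomputable def W (v : ℝ) (n i : ℕ) : ℝ :=
  ((n:ℝ)+1) * (-(i:ℝ)) * (v + 2*i + 2) * (n.choose (2*i) : ℝ) *
    Real.Gamma ((i:ℝ) + 1/2) / Real.Gamma ((i:ℝ) + v/2 + 2)

set_option maxHeartbeats 1000000 in
lemma key (v : ℝ) (hv : v > -1) (n i : ℕ) :
    (n:ℝ)*((n:ℝ)+v+2) * (((n+1).choose (2*i+1) : ℝ) *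
        (Real.Gamma ((i:ℝ)+3/2) / Real.Gamma ((i:ℝ)+v/2+2)))
      - ((n:ℝ)+1)*(2*(n:ℝ)+v+1) * ((n.choose (2*i+1) : ℝ) *
        (Real.Gamma ((i:ℝ)+3/2) / Real.Gamma ((i:ℝ)+v/2+2)))
    = W v n (i+1) - W v n i := by
  have hx : (0:ℝ) < (i:ℝ) + 1/2 := by positivity
  have hy0 : (0:ℝ) < (i:ℝ) + v/2 + 2 := by
    have : (0:ℝ) ≤ (i:ℝ) := Nat.cast_nonneg i
    linarith
  have hy : (0:ℝ) < Real.Gamma ((i:ℝ) + v/2 + 2) := Real.Gamma_pos_of_pos hy0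
  have hg1 : Real.Gamma ((i:ℝ)+3/2) = ((i:ℝ)+1/2) * Real.Gamma ((i:ℝ)+1/2) := by
    rw [show (i:ℝ)+3/2 = ((i:ℝ)+1/2)+1 by ring, Real.Gamma_add_one (ne_of_gt hx)]
  have hg2 : Real.Gamma ((i:ℝ)+1+v/2+2) = ((i:ℝ)+v/2+2) * Real.Gamma ((i:ℝ)+v/2+2) := by
    rw [show (i:ℝ)+1+v/2+2 = ((i:ℝ)+v/2+2)+1 by ring, Real.Gamma_add_one (ne_of_gt hy0)]
  have hP : ((n+1).choose (2*i+1) : ℝ) = (n.choose (2*i) : ℝ) + (n.choose (2*i+1) : ℝ) := by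
    rw [Nat.choose_succ_succ]; push_cast; ring
  have r1 := choose_cast_rel n (2*i)
  have r2 := choose_cast_rel n (2*i+1)
  push_cast at r1 r2
  have hmain : ((n:ℝ)*((n:ℝ)+v+2)*((n.choose (2*i):ℝ)+(n.choose (2*i+1):ℝ))
        - ((n:ℝ)+1)*(2*(n:ℝ)+v+1)*(n.choose (2*i+1):ℝ)) * (((i:ℝ)+1/2)*((i:ℝ)+v/2+2))
      = (((n:ℝ)+1)*(-((i:ℝ)+1))*(v+2*(i:ℝ)+4)*(n.choose (2*i+1+1):ℝ)) * ((i:ℝ)+1/2)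
        - (((n:ℝ)+1)*(-(i:ℝ))*(v+2*(i:ℝ)+2)*(n.choose (2*i):ℝ)) * ((i:ℝ)+v/2+2) := by
    linear_combination (-(((i:ℝ)+v/2+2))*(((n:ℝ)+1)*(i:ℝ)+((n:ℝ)+v+2)/2)) * r1
      + ((((n:ℝ)+1))*(v+2*(i:ℝ)+4)*(2*(i:ℝ)+1)/4) * r2
  rw [W, W]
  rw [show 2*(i+1) = 2*i+1+1 by ring]
  push_cast
  rw [show ((i:ℝ)+1+1/2) = (i:ℝ)+3/2 by ring, hg2, hg1, hP]
  have hw : (((i:ℝ)+v/2+2) * ((i:ℝ)+v/2+2)⁻¹) = 1 := mul_inv_cancel₀ (ne_of_gt hy0)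
  rw [div_mul_eq_div_div_swap]
  linear_combination
    (Real.Gamma ((i:ℝ)+1/2) * (Real.Gamma ((i:ℝ)+v/2+2))⁻¹ * (((i:ℝ)+v/2+2))⁻¹) * hmain
    - ((((n:ℝ)*((n:ℝ)+v+2)*((n.choose (2*i):ℝ)+(n.choose (2*i+1):ℝ))
          - ((n:ℝ)+1)*(2*(n:ℝ)+v+1)*(n.choose (2*i+1):ℝ))*((i:ℝ)+1/2)
        + ((n:ℝ)+1)*(-(i:ℝ))*(v+2*(i:ℝ)+2)*(n.choose (2*i):ℝ))
        * Real.Gamma ((i:ℝ)+1/2) * (Real.Gamma ((i:ℝ)+v/2+2))⁻¹) * hw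

noncomputable def Tsum (v : ℝ) (n : ℕ) : ℝ :=
  ∑ i ∈ range n, (n.choose (2*i+1) : ℝ) *
    (Real.Gamma ((i:ℝ)+3/2) / Real.Gamma ((i:ℝ)+v/2+2))

lemma Tsum_rec (v : ℝ) (hv : v > -1) (n : ℕ) :
    (n:ℝ)*((n:ℝ)+v+2) * Tsum v (n+1) = ((n:ℝ)+1)*(2*(n:ℝ)+v+1) * Tsum v n := by
  have h1 : Tsum v n = ∑ i ∈ range (n+1), (n.choose (2*i+1) : ℝ) *
      (Real.Gamma ((i:ℝ)+3/2) / Real.Gamma ((i:ℝ)+v/2+2)) := by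
    rw [Finset.sum_range_succ, Nat.choose_eq_zero_of_lt (by omega : n < 2*n+1)]
    simp [Tsum]
  have h0 : (n:ℝ)*((n:ℝ)+v+2) * Tsum v (n+1) - ((n:ℝ)+1)*(2*(n:ℝ)+v+1) * Tsum v n = 0 := by
    calc (n:ℝ)*((n:ℝ)+v+2) * Tsum v (n+1) - ((n:ℝ)+1)*(2*(n:ℝ)+v+1) * Tsum v n
        = ∑ i ∈ range (n+1),
            ((n:ℝ)*((n:ℝ)+v+2) * (((n+1).choose (2*i+1) : ℝ) *
              (Real.Gamma ((i:ℝ)+3/2) / Real.Gamma ((i:ℝ)+v/2+2)))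
            - ((n:ℝ)+1)*(2*(n:ℝ)+v+1) * ((n.choose (2*i+1) : ℝ) *
              (Real.Gamma ((i:ℝ)+3/2) / Real.Gamma ((i:ℝ)+v/2+2)))) := by
          rw [Tsum, h1, Finset.mul_sum, Finset.mul_sum, Finset.sum_sub_distrib]
      _ = ∑ i ∈ range (n+1), (W v n (i+1) - W v n i) :=
          Finset.sum_congr rfl (fun i _ => key v hv n i)
      _ = W v n (n+1) - W v n 0 := Finset.sum_range_sub _ _
      _ = 0 := by
          rw [W, W, Nat.choose_eq_zero_of_lt (by omega : n < 2*(n+1))]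
          simp
  linarith

lemma Tsum_eq (v : ℝ) (hv : v > -1) : ∀ n : ℕ,
    Tsum v n = (2:ℝ)^((n:ℝ)+v) * n * Real.Gamma ((n:ℝ)+(v+1)/2) / Real.Gamma ((n:ℝ)+v+2) := by
  intro n
  induction n with
  | zero => simp [Tsum]
  | succ m ih =>
    rcases Nat.eq_zero_or_pos m with hm | hm
    · subst hm
      have hT1 : Tsum v 1 = Real.Gamma ((3:ℝ)/2) / Real.Gamma (v/2+2) := by
        rw [Tsum, Finset.sum_range_one]
        norm_num
      rw [hT1]
      have h32 : Real.Gamma ((3:ℝ)/2) = (1/2) * √π := by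
        rw [show (3:ℝ)/2 = 1/2 + 1 by ring, Real.Gamma_add_one (by norm_num),
          Real.Gamma_one_half_eq]
      have hv1 : (0:ℝ) < (v+1)/2 := by linarith
      have hdup := Real.Gamma_mul_Gamma_add_half ((v+1)/2)
      rw [show (v+1)/2 + 1/2 = v/2+1 by ring, show 2*((v+1)/2) = v+1 by ring] at hdup
      rw [show (1:ℝ)-(v+1) = -v by ring] at hdup
      have h2 : (2:ℝ)^(1+v) * (2:ℝ)^(-v) = 2 := by
        rw [← Real.rpow_add (by norm_num : (0:ℝ) < 2)]
        norm_num
      have hg1 : Real.Gamma ((1:ℝ)+(v+1)/2) = ((v+1)/2) * Real.Gamma ((v+1)/2) := by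
        rw [show (1:ℝ)+(v+1)/2 = ((v+1)/2)+1 by ring, Real.Gamma_add_one (ne_of_gt hv1)]
      have hg2 : Real.Gamma ((1:ℝ)+v+2) = (v+2)*(v+1) * Real.Gamma (v+1) := by
        rw [show (1:ℝ)+v+2 = (v+2)+1 by ring, Real.Gamma_add_one (by linarith : (v:ℝ)+2 ≠ 0)]
        rw [show (v:ℝ)+2 = (v+1)+1 by ring, Real.Gamma_add_one (by linarith : (v:ℝ)+1 ≠ 0)]
        ring
      have hg3 : Real.Gamma (v/2+2) = (v/2+1) * Real.Gamma (v/2+1) := by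
        rw [show v/2+2 = (v/2+1)+1 by ring, Real.Gamma_add_one (by linarith : v/2+1 ≠ 0)]
      have hGv : (0:ℝ) < Real.Gamma (v/2+1) := Real.Gamma_pos_of_pos (by linarith)
      have hG1 : (0:ℝ) < Real.Gamma (v+1) := Real.Gamma_pos_of_pos (by linarith)
      push_cast
      rw [h32, hg1, hg2, hg3]
      rw [div_eq_div_iff (ne_of_gt (mul_pos (by linarith : (0:ℝ) < v/2+1) hGv))
        (ne_of_gt (mul_pos (mul_pos (by linarith : (0:ℝ) < v+2) (by linarith : (0:ℝ) < v+1)) hG1))]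
      linear_combination (-(2:ℝ)^(1+v)*((v+1)/2)*(v/2+1)) * hdup
        - (√π * Real.Gamma (v+1) * ((v+1)/2)*(v/2+1)) * h2
    · have hrec := Tsum_rec v hv m
      have hm0 : ((m:ℝ)) ≠ 0 := Nat.cast_ne_zero.mpr (Nat.pos_iff_ne_zero.mp hm)
      have hmv : ((m:ℝ)+v+2) ≠ 0 := by
        have : (1:ℝ) ≤ (m:ℝ) := by exact_mod_cast hm
        linarith
      have hne : (m:ℝ)*((m:ℝ)+v+2) ≠ 0 := mul_ne_zero hm0 hmv
      apply mul_left_cancel₀ hne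
      rw [hrec, ih]
      have hg1 : Real.Gamma (((m:ℕ):ℝ)+1+(v+1)/2)
          = ((m:ℝ)+(v+1)/2) * Real.Gamma ((m:ℝ)+(v+1)/2) := by
        rw [show ((m:ℕ):ℝ)+1+(v+1)/2 = ((m:ℝ)+(v+1)/2)+1 by ring,
          Real.Gamma_add_one]
        have : (0:ℝ) ≤ (m:ℝ) := Nat.cast_nonneg m
        have : (0:ℝ) < (m:ℝ)+(v+1)/2 := by linarith
        exact ne_of_gt this
      have hg2 : Real.Gamma (((m:ℕ):ℝ)+1+v+2) = ((m:ℝ)+v+2) * Real.Gamma ((m:ℝ)+v+2) := by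
        rw [show ((m:ℕ):ℝ)+1+v+2 = ((m:ℝ)+v+2)+1 by ring, Real.Gamma_add_one hmv]
      have hp : (2:ℝ)^(((m:ℝ)+1)+v) = 2 * (2:ℝ)^((m:ℝ)+v) := by
        rw [show ((m:ℝ)+1)+v = ((m:ℝ)+v)+1 by ring,
          Real.rpow_add_one (by norm_num : (2:ℝ) ≠ 0)]
        ring
      have hGm : (0:ℝ) < Real.Gamma ((m:ℝ)+v+2) := by
        apply Real.Gamma_pos_of_pos
        have : (0:ℝ) ≤ (m:ℝ) := Nat.cast_nonneg m
        linarith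
      push_cast
      rw [hg1, hg2, hp]
      field_simp
      ring

end OddIdxAux

open OddIdxAux in
set_option maxHeartbeats 1000000 in
theorem odd_index_sum_identity (n : ℕ) (v : ℝ) (hv : v > -1) :
    ∑ k ∈ Finset.Icc 1 ((n + 1) / 2),
      (n.choose (2 * k - 1) : ℝ) * (2 : ℝ) ^ ((n : ℝ) - 2 * (k : ℝ)) *
        ((2 * k).choose k : ℝ) * (gbinom ((2 * (k : ℝ) + v) / 2) (k : ℝ))⁻¹
    = (1 / 2) * gbinom (2 * (n : ℝ) + v + 2) ((2 * (n : ℝ) + v + 2) / 2) *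
        (gbinom ((n : ℝ) + v + 1) (v / 2))⁻¹
      - gbinom (2 * (n : ℝ) + v) ((2 * (n : ℝ) + v) / 2) *
        (gbinom ((n : ℝ) + v) (v / 2))⁻¹ := by
  have h2pos : (0:ℝ) < 2 := by norm_num
  have hpi : (0:ℝ) < √π := Real.sqrt_pos.mpr Real.pi_pos
  have hGv : (0:ℝ) < Real.Gamma (v/2+1) := Real.Gamma_pos_of_pos (by linarith)
  have hn0 : (0:ℝ) ≤ (n:ℝ) := Nat.cast_nonneg n
  -- summand conversion
  have hsummand : ∀ K : ℕ, 1 ≤ K →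
      (n.choose (2 * K - 1) : ℝ) * (2 : ℝ) ^ ((n : ℝ) - 2 * (K : ℝ)) *
        ((2 * K).choose K : ℝ) * (gbinom ((2 * (K : ℝ) + v) / 2) (K : ℝ))⁻¹
      = (2:ℝ)^(n:ℝ) * Real.Gamma (v/2+1) / √π *
        ((n.choose (2*K-1):ℝ) * (Real.Gamma ((K:ℝ)+1/2) / Real.Gamma ((K:ℝ)+v/2+1))) := by
    intro K hK
    have hch : ((2*K).choose K : ℝ) * (K.factorial:ℝ) * (K.factorial:ℝ)
        = ((2*K).factorial : ℝ) := by
      have h := Nat.choose_mul_factorial_mul_factorial (show K ≤ 2*K by omega)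
      rw [show 2*K - K = K by omega] at h
      exact_mod_cast h
    have hdup := Real.Gamma_mul_Gamma_add_half ((K:ℝ)+1/2)
    rw [show (K:ℝ)+1/2+1/2 = (K:ℝ)+1 by ring,
      show 2*((K:ℝ)+1/2) = ((2*K:ℕ):ℝ)+1 by push_cast; ring] at hdup
    rw [show (1:ℝ)-(((2*K:ℕ):ℝ)+1) = -(2*(K:ℝ)) by push_cast; ring,
      Real.Gamma_nat_eq_factorial, Real.Gamma_nat_eq_factorial] at hdup
    have hKf : (0:ℝ) < (K.factorial : ℝ) := by exact_mod_cast K.factorial_pos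
    have hyK : (0:ℝ) < Real.Gamma ((K:ℝ)+v/2+1) := Real.Gamma_pos_of_pos (by
      have : (1:ℝ) ≤ (K:ℝ) := by exact_mod_cast hK
      linarith)
    have hGK : Real.Gamma ((K:ℝ)+1/2)
        = ((2*K).choose K : ℝ) * (K.factorial:ℝ) * (2:ℝ)^(-(2*(K:ℝ))) * √π := by
      apply mul_right_cancel₀ (ne_of_gt hKf)
      linear_combination hdup - ((2:ℝ)^(-(2*(K:ℝ))) * √π) * hch
    have hpow : (2:ℝ)^((n:ℝ)-2*(K:ℝ)) = (2:ℝ)^(n:ℝ) * (2:ℝ)^(-(2*(K:ℝ))) := by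
      rw [show (n:ℝ)-2*(K:ℝ) = (n:ℝ) + (-(2*(K:ℝ))) by ring, Real.rpow_add h2pos]
    rw [gbinom]
    rw [show (2*(K:ℝ)+v)/2 + 1 = (K:ℝ)+v/2+1 by ring,
      show (2*(K:ℝ)+v)/2 - (K:ℝ) + 1 = v/2+1 by ring,
      Real.Gamma_nat_eq_factorial, hpow, hGK, inv_div]
    have hspi : √π * (√π)⁻¹ = 1 := mul_inv_cancel₀ (ne_of_gt hpi)
    linear_combination (-((n.choose (2*K-1):ℝ) * ((2:ℝ)^(n:ℝ) * (2:ℝ)^(-(2*(K:ℝ))))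
      * ((2*K).choose K : ℝ) * (K.factorial:ℝ) * Real.Gamma (v/2+1)
      * (Real.Gamma ((K:ℝ)+v/2+1))⁻¹)) * hspi
  -- extend to Icc 1 n
  have hstep1 : ∑ k ∈ Finset.Icc 1 ((n + 1) / 2),
      (n.choose (2 * k - 1) : ℝ) * (2 : ℝ) ^ ((n : ℝ) - 2 * (k : ℝ)) *
        ((2 * k).choose k : ℝ) * (gbinom ((2 * (k : ℝ) + v) / 2) (k : ℝ))⁻¹
      = ∑ k ∈ Finset.Icc 1 n,
      (n.choose (2 * k - 1) : ℝ) * (2 : ℝ) ^ ((n : ℝ) - 2 * (k : ℝ)) *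
        ((2 * k).choose k : ℝ) * (gbinom ((2 * (k : ℝ) + v) / 2) (k : ℝ))⁻¹ := by
    apply Finset.sum_subset
    · apply Finset.Icc_subset_Icc_right; omega
    · intro k hk hk2
      simp only [Finset.mem_Icc] at hk hk2
      have hx : n < 2*k-1 := by omega
      simp [Nat.choose_eq_zero_of_lt hx]
  rw [hstep1, ← Finset.Ico_add_one_right_eq_Icc, Finset.sum_Ico_eq_sum_range, Nat.add_sub_cancel]
  have hstep2 : ∑ i ∈ Finset.range n,
      (n.choose (2 * (1+i) - 1) : ℝ) * (2 : ℝ) ^ ((n : ℝ) - 2 * ((1+i:ℕ) : ℝ)) *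
        ((2 * (1+i)).choose (1+i) : ℝ) * (gbinom ((2 * ((1+i:ℕ) : ℝ) + v) / 2) ((1+i:ℕ) : ℝ))⁻¹
      = (2:ℝ)^(n:ℝ) * Real.Gamma (v/2+1) / √π * Tsum v n := by
    rw [Tsum, Finset.mul_sum]
    refine Finset.sum_congr rfl (fun i _ => ?_)
    rw [hsummand (1+i) (by omega)]
    rw [show ((1+i:ℕ):ℝ) = (i:ℝ)+1 by push_cast; ring]
    rw [show 2*(1+i)-1 = 2*i+1 by omega]
    rw [show (i:ℝ)+1+1/2 = (i:ℝ)+3/2 by ring, show (i:ℝ)+1+v/2+1 = (i:ℝ)+v/2+2 by ring]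
  rw [hstep2, Tsum_eq v hv n]
  -- RHS conversion
  simp only [gbinom]
  rw [show 2*(n:ℝ)+v+2+1 = 2*(n:ℝ)+v+3 by ring,
    show (2*(n:ℝ)+v+2)/2+1 = (n:ℝ)+v/2+2 by ring,
    show 2*(n:ℝ)+v+2 - (2*(n:ℝ)+v+2)/2 + 1 = (n:ℝ)+v/2+2 by ring,
    show (n:ℝ)+v+1+1 = (n:ℝ)+v+2 by ring,
    show (n:ℝ)+v+1-v/2+1 = (n:ℝ)+v/2+2 by ring,
    show (2*(n:ℝ)+v)/2+1 = (n:ℝ)+v/2+1 by ring,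
    show 2*(n:ℝ)+v - (2*(n:ℝ)+v)/2 + 1 = (n:ℝ)+v/2+1 by ring,
    show (n:ℝ)+v-v/2+1 = (n:ℝ)+v/2+1 by ring]
  have hdup1 := Real.Gamma_mul_Gamma_add_half ((n:ℝ)+v/2+3/2)
  rw [show (n:ℝ)+v/2+3/2+1/2 = (n:ℝ)+v/2+2 by ring,
    show 2*((n:ℝ)+v/2+3/2) = 2*(n:ℝ)+v+3 by ring] at hdup1
  rw [show (1:ℝ)-(2*(n:ℝ)+v+3) = -(2*(n:ℝ)+v+2) by ring] at hdup1
  rw [show (n:ℝ)+v/2+3/2 = ((n:ℝ)+(v+1)/2)+1 by ring,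
    Real.Gamma_add_one (ne_of_gt (show (0:ℝ) < (n:ℝ)+(v+1)/2 by linarith))] at hdup1
  have hdup2 := Real.Gamma_mul_Gamma_add_half ((n:ℝ)+(v+1)/2)
  rw [show (n:ℝ)+(v+1)/2+1/2 = (n:ℝ)+v/2+1 by ring,
    show 2*((n:ℝ)+(v+1)/2) = 2*(n:ℝ)+v+1 by ring] at hdup2
  rw [show (1:ℝ)-(2*(n:ℝ)+v+1) = -(2*(n:ℝ)+v) by ring] at hdup2
  have hC1 : Real.Gamma ((n:ℝ)+v+2) = ((n:ℝ)+v+1) * Real.Gamma ((n:ℝ)+v+1) := by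
    rw [show (n:ℝ)+v+2 = ((n:ℝ)+v+1)+1 by ring,
      Real.Gamma_add_one (ne_of_gt (show (0:ℝ) < (n:ℝ)+v+1 by linarith))]
  have hq1 : (2:ℝ)^(n:ℝ) * (2:ℝ)^((n:ℝ)+v) * (2:ℝ)^(-(2*(n:ℝ)+v)) = 1 := by
    rw [← Real.rpow_add h2pos, ← Real.rpow_add h2pos,
      show (n:ℝ)+((n:ℝ)+v)+(-(2*(n:ℝ)+v)) = 0 by ring, Real.rpow_zero]
  have hq2 : (2:ℝ)^(n:ℝ) * (2:ℝ)^((n:ℝ)+v) * (2:ℝ)^(-(2*(n:ℝ)+v+2)) * 4 = 1 := by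
    rw [← Real.rpow_add h2pos, ← Real.rpow_add h2pos,
      show (n:ℝ)+((n:ℝ)+v)+(-(2*(n:ℝ)+v+2)) = -((2:ℕ):ℝ) by push_cast; ring,
      Real.rpow_neg (le_of_lt h2pos), Real.rpow_natCast]
    norm_num
  have hA1 : Real.Gamma (2*(n:ℝ)+v+3)
      = ((n:ℝ)+(v+1)/2) * Real.Gamma ((n:ℝ)+(v+1)/2) * Real.Gamma ((n:ℝ)+v/2+2)
        * ((2:ℝ)^(n:ℝ) * (2:ℝ)^((n:ℝ)+v) * 4) / √π := by
    rw [eq_div_iff (ne_of_gt hpi)]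
    linear_combination (-((2:ℝ)^(n:ℝ) * (2:ℝ)^((n:ℝ)+v) * 4)) * hdup1
      - (Real.Gamma (2*(n:ℝ)+v+3) * √π) * hq2
  have hA2 : Real.Gamma (2*(n:ℝ)+v+1)
      = Real.Gamma ((n:ℝ)+(v+1)/2) * Real.Gamma ((n:ℝ)+v/2+1)
        * ((2:ℝ)^(n:ℝ) * (2:ℝ)^((n:ℝ)+v)) / √π := by
    rw [eq_div_iff (ne_of_gt hpi)]
    linear_combination (-((2:ℝ)^(n:ℝ) * (2:ℝ)^((n:ℝ)+v))) * hdup2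
      - (Real.Gamma (2*(n:ℝ)+v+1) * √π) * hq1
  rw [hA1, hA2, hC1]
  have hB1 : (0:ℝ) < Real.Gamma ((n:ℝ)+v/2+2) := Real.Gamma_pos_of_pos (by linarith)
  have hB2 : (0:ℝ) < Real.Gamma ((n:ℝ)+v/2+1) := Real.Gamma_pos_of_pos (by linarith)
  have hC2 : (0:ℝ) < Real.Gamma ((n:ℝ)+v+1) := Real.Gamma_pos_of_pos (by linarith)
  have hnv1 : (0:ℝ) < (n:ℝ)+v+1 := by linarith
  have hn : ((n:ℝ)+v+1) * ((n:ℝ)+v+1)⁻¹ = 1 := mul_inv_cancel₀ (ne_of_gt hnv1)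
  have hb1c : Real.Gamma ((n:ℝ)+v/2+2) * (Real.Gamma ((n:ℝ)+v/2+2))⁻¹ = 1 :=
    mul_inv_cancel₀ (ne_of_gt hB1)
  have hb2c : Real.Gamma ((n:ℝ)+v/2+1) * (Real.Gamma ((n:ℝ)+v/2+1))⁻¹ = 1 :=
    mul_inv_cancel₀ (ne_of_gt hB2)
  simp only [inv_div, div_div_eq_mul_div, ← div_div]
  linear_combination
    (-((2:ℝ)^(n:ℝ) * (2:ℝ)^((n:ℝ)+v) * Real.Gamma (v/2+1) * (√π)⁻¹
      * (Real.Gamma ((n:ℝ)+v+1))⁻¹ * Real.Gamma ((n:ℝ)+(v+1)/2))) * hn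
    - ((2:ℝ)^(n:ℝ) * (2:ℝ)^((n:ℝ)+v) * Real.Gamma (v/2+1) * (√π)⁻¹
      * (Real.Gamma ((n:ℝ)+v+1))⁻¹ * Real.Gamma ((n:ℝ)+(v+1)/2)
      * (2*(n:ℝ)+v+1) * ((n:ℝ)+v+1)⁻¹
      * (Real.Gamma ((n:ℝ)+v/2+2) * (Real.Gamma ((n:ℝ)+v/2+2))⁻¹ + 1)) * hb1c
    + ((2:ℝ)^(n:ℝ) * (2:ℝ)^((n:ℝ)+v) * Real.Gamma (v/2+1) * (√π)⁻¹
      * (Real.Gamma ((n:ℝ)+v+1))⁻¹ * Real.Gamma ((n:ℝ)+(v+1)/2)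
      * (Real.Gamma ((n:ℝ)+v/2+1) * (Real.Gamma ((n:ℝ)+v/2+1))⁻¹ + 1)) * hb2c
end

section
/- For every nonnegative integer n, ∑_{k=1}^{⌈n/2⌉} C(n, 2k−1) · 2^{n−2k} · Cat(k) = (1/2) · Cat(n+2) − Cat(n+1), as an identity of rational numbers (2^{n−2k} denotes the rational number 2^n/2^{2k}). -/
/-- The Catalan number `Cat(j) = C(2j, j)/(j+1)` as a rational number. -/
def catalanQ (j : ℕ) : ℚ := ((2 * j).choose j : ℚ) / ((j : ℚ) + 1)

private def tQ (n k : ℕ) : ℚ :=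
  (n.choose (2 * k - 1) : ℚ) * ((2 : ℚ) ^ n / (2 : ℚ) ^ (2 * k)) * catalanQ k

private def gQ (n j : ℕ) : ℚ :=
  -8 * ((n : ℚ) + 1) * (j : ℚ) * (n.choose (2 * j) : ℚ) * ((2 * j + 2).choose (j + 1) : ℚ)
    * (2 : ℚ) ^ n / ((2 : ℚ) ^ (2 * j + 2) * (2 * (j : ℚ) + 1))

private lemma castB (n m : ℕ) :
    (n.choose (m + 1) : ℚ) = ((n : ℚ) - m) * (n.choose m : ℚ) / ((m : ℚ) + 1) := by
  rw [eq_div_iff (by positivity)]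
  rcases le_or_gt m n with h | h
  · have h2 := Nat.choose_succ_right_eq n m
    have h3 : ((n - m : ℕ) : ℚ) = (n : ℚ) - m := Nat.cast_sub h
    have h4 : (n.choose (m + 1) : ℚ) * ((m : ℚ) + 1) = (n.choose m : ℚ) * ((n - m : ℕ) : ℚ) := by
      exact_mod_cast congrArg (Nat.cast : ℕ → ℚ) h2
    rw [h3] at h4
    linear_combination h4
  · have h1 : n.choose (m + 1) = 0 := Nat.choose_eq_zero_of_lt (by omega)
    have h2 : n.choose m = 0 := Nat.choose_eq_zero_of_lt h
    simp [h1, h2]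

private lemma centralQdiv (m : ℕ) :
    ((2 * m + 4).choose (m + 2) : ℚ)
      = 2 * (2 * (m : ℚ) + 3) * ((2 * m + 2).choose (m + 1) : ℚ) / ((m : ℚ) + 2) := by
  rw [eq_div_iff (by positivity)]
  have h := Nat.succ_mul_centralBinom_succ (m + 1)
  simp only [Nat.centralBinom] at h
  rw [show 2 * (m + 1 + 1) = 2 * m + 4 from by omega, show m + 1 + 1 = m + 2 from by omega,
    show 2 * (m + 1) + 1 = 2 * m + 3 from by omega,
    show 2 * (m + 1) = 2 * m + 2 from by omega] at h
  have h' : ((m : ℚ) + 2) * ((2 * m + 4).choose (m + 2) : ℚ)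
      = 2 * (2 * (m : ℚ) + 3) * ((2 * m + 2).choose (m + 1) : ℚ) := by exact_mod_cast h
  linear_combination h'

private lemma key_s9 (n j : ℕ) :
    (n : ℚ) * ((n : ℚ) + 4) * tQ (n + 1) (j + 1)
      - 2 * ((n : ℚ) + 1) * (2 * (n : ℚ) + 3) * tQ n (j + 1)
    = gQ n (j + 1) - gQ n j := by
  have e1 : 2 * (j + 1) - 1 = 2 * j + 1 := by omega
  have e6 : 2 * j + 2 - 1 = 2 * j + 1 := by omega
  have e2 : 2 * (j + 1) = 2 * j + 2 := by omega
  have e3 : 2 * j + 2 + 2 = 2 * j + 4 := by omega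
  have e4 : j + 1 + 1 = j + 2 := by omega
  have e5 : 2 * j + 2 + 1 = 2 * j + 3 := by omega
  have hP : (((n + 1).choose (2 * j + 1)) : ℚ)
      = (n.choose (2 * j) : ℚ) + (n.choose (2 * j + 1) : ℚ) := by
    rw [Nat.choose_succ_succ]; push_cast; ring
  have hE := centralQdiv j
  have hC := castB n (2 * j + 1)
  rw [show 2 * j + 1 + 1 = 2 * j + 2 from by omega] at hC
  have hB := castB n (2 * j)
  simp only [tQ, gQ, catalanQ, e1, e6, e2, e3, e4, e5]
  rw [hP, hE, hC, hB]
  push_cast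
  have hj1 : (2 * (j : ℚ) + 1) ≠ 0 := by positivity
  have hj2 : ((j : ℚ) + 2) ≠ 0 := by positivity
  have hj3 : (2 * (j : ℚ) + 3) ≠ 0 := by positivity
  field_simp
  ring

private lemma sum_ext (m M : ℕ) (h : (m + 1) / 2 ≤ M) :
    (∑ k ∈ Finset.Icc 1 ((m + 1) / 2), tQ m k) = ∑ k ∈ Finset.Icc 1 M, tQ m k := by
  apply Finset.sum_subset (Finset.Icc_subset_Icc_right h)
  intro k hk hnk
  simp only [Finset.mem_Icc] at hk hnk
  have hlt : m < 2 * k - 1 := by omega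
  simp [tQ, Nat.choose_eq_zero_of_lt hlt]

private lemma recS (n : ℕ) :
    (n : ℚ) * ((n : ℚ) + 4) * (∑ k ∈ Finset.Icc 1 ((n + 1 + 1) / 2), tQ (n + 1) k)
      = 2 * ((n : ℚ) + 1) * (2 * (n : ℚ) + 3) * (∑ k ∈ Finset.Icc 1 ((n + 1) / 2), tQ n k) := by
  rw [sum_ext (n + 1) (n + 2) (by omega), sum_ext n (n + 2) (by omega)]
  rw [← sub_eq_zero, Finset.mul_sum, Finset.mul_sum, ← Finset.sum_sub_distrib]
  have hre : (∑ k ∈ Finset.Icc 1 (n + 2),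
      ((n : ℚ) * ((n : ℚ) + 4) * tQ (n + 1) k
        - 2 * ((n : ℚ) + 1) * (2 * (n : ℚ) + 3) * tQ n k))
      = ∑ i ∈ Finset.range (n + 2),
        ((n : ℚ) * ((n : ℚ) + 4) * tQ (n + 1) (i + 1)
          - 2 * ((n : ℚ) + 1) * (2 * (n : ℚ) + 3) * tQ n (i + 1)) := by
    rw [← Finset.Ico_add_one_right_eq_Icc, Finset.sum_Ico_eq_sum_range]
    simp only [show n + 2 + 1 - 1 = n + 2 from by omega]
    exact Finset.sum_congr rfl fun i _ => by rw [add_comm 1 i]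
  rw [hre]
  calc ∑ i ∈ Finset.range (n + 2),
        ((n : ℚ) * ((n : ℚ) + 4) * tQ (n + 1) (i + 1)
          - 2 * ((n : ℚ) + 1) * (2 * (n : ℚ) + 3) * tQ n (i + 1))
      = ∑ i ∈ Finset.range (n + 2), (gQ n (i + 1) - gQ n i) :=
        Finset.sum_congr rfl fun i _ => key_s9 n i
    _ = gQ n (n + 2) - gQ n 0 := Finset.sum_range_sub (gQ n) (n + 2)
    _ = 0 := by
        have h0 : n.choose (2 * (n + 2)) = 0 := Nat.choose_eq_zero_of_lt (by omega)
        simp [gQ, h0]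

private lemma rrec (n : ℕ) :
    (n : ℚ) * ((n : ℚ) + 4) * (1 / 2 * catalanQ (n + 1 + 2) - catalanQ (n + 1 + 1))
      = 2 * ((n : ℚ) + 1) * (2 * (n : ℚ) + 3)
        * (1 / 2 * catalanQ (n + 2) - catalanQ (n + 1)) := by
  have hE1 := centralQdiv (n + 1)
  rw [show 2 * (n + 1) + 4 = 2 * n + 6 from by omega, show n + 1 + 2 = n + 3 from by omega,
    show 2 * (n + 1) + 2 = 2 * n + 4 from by omega, show n + 1 + 1 = n + 2 from by omega] at hE1
  have hE0 := centralQdiv n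
  simp only [catalanQ, show n + 1 + 2 = n + 3 from by omega, show n + 1 + 1 = n + 2 from by omega,
    show 2 * (n + 3) = 2 * n + 6 from by omega, show 2 * (n + 2) = 2 * n + 4 from by omega,
    show 2 * (n + 1) = 2 * n + 2 from by omega]
  rw [hE1, hE0]
  push_cast
  have h1 : ((n : ℚ) + 2) ≠ 0 := by positivity
  have h2 : ((n : ℚ) + 3) ≠ 0 := by positivity
  have h3 : ((n : ℚ) + 4) ≠ 0 := by positivity
  have h4 : ((n : ℚ) + 1 + 1) ≠ 0 := by positivity
  field_simp
  ring

private lemma mainS : ∀ n : ℕ,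
    (∑ k ∈ Finset.Icc 1 ((n + 1) / 2), tQ n k)
      = 1 / 2 * catalanQ (n + 2) - catalanQ (n + 1) := by
  intro n
  induction n using Nat.twoStepInduction with
  | zero =>
    have c1 : Nat.choose 4 2 = 6 := by decide
    have c2 : Nat.choose 2 1 = 2 := by decide
    norm_num [catalanQ, c1, c2]
  | one =>
    have c1 : Nat.choose 6 3 = 20 := by decide
    have c2 : Nat.choose 4 2 = 6 := by decide
    have c3 : Nat.choose 2 1 = 2 := by decide
    norm_num [tQ, catalanQ, c1, c2, c3]
  | more m ih1 ih2 =>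
    have hrec := recS (m + 1)
    have hr := rrec (m + 1)
    rw [show m + 1 + 1 = m + 2 from by omega] at hrec hr
    rw [ih2] at hrec
    have hp : ((m + 1 : ℕ) : ℚ) * (((m + 1 : ℕ) : ℚ) + 4) ≠ 0 := by
      push_cast; positivity
    exact mul_left_cancel₀ hp (hrec.trans hr.symm)

theorem odd_binom_catalan_sum (n : ℕ) :
    ∑ k ∈ Finset.Icc 1 ((n + 1) / 2),
      (n.choose (2 * k - 1) : ℚ) * ((2 : ℚ) ^ n / (2 : ℚ) ^ (2 * k)) * catalanQ k
    = (1 / 2) * catalanQ (n + 2) - catalanQ (n + 1) := by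
  have h := mainS n
  simpa only [tQ] using h
end

section
/- For every nonnegative integer n, ∑_{k=0}^{n} (−1)^k · C(2k, k) · C(2(n−k), n−k) equals 2^n · C(n, n/2) if n is even, and equals 0 if n is odd. -/
open Finset Nat

private def S (n : ℕ) : ℤ :=
  ∑ k ∈ Finset.range (n + 1),
    (-1 : ℤ) ^ k * (Nat.centralBinom k : ℤ) * (Nat.centralBinom (n - k) : ℤ)

private def g (n k : ℕ) : ℤ :=
  2 * k * (-1) ^ k * (Nat.centralBinom k : ℤ) * (catalan (n + 1 - k) : ℤ)

-- the key per-term (Zeilberger certificate) identity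
private lemma key_s10 (k m : ℕ) :
    ((k : ℤ) + m + 2) * ((-1 : ℤ) ^ k * (Nat.centralBinom k : ℤ) * (Nat.centralBinom (m + 2) : ℤ))
      = 16 * ((k : ℤ) + m + 1) * ((-1 : ℤ) ^ k * (Nat.centralBinom k : ℤ) * (Nat.centralBinom m : ℤ))
        + (2 * ((k : ℤ) + 1) * (-1) ^ (k + 1) * (Nat.centralBinom (k + 1) : ℤ) * (catalan m : ℤ)
           - 2 * (k : ℤ) * (-1) ^ k * (Nat.centralBinom k : ℤ) * (catalan (m + 1) : ℤ)) := by
  set A := (Nat.centralBinom k : ℤ)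
  set B := (Nat.centralBinom (k + 1) : ℤ)
  set P := (Nat.centralBinom m : ℤ)
  set Q := (Nat.centralBinom (m + 1) : ℤ)
  set R := (Nat.centralBinom (m + 2) : ℤ)
  set c := (catalan m : ℤ)
  set d := (catalan (m + 1) : ℤ)
  have h1 : ((m : ℤ) + 1) * c = P := by
    have := congrArg (Nat.cast : ℕ → ℤ) (succ_mul_catalan_eq_centralBinom m); push_cast at this; linarith
  have h2 : ((m : ℤ) + 2) * d = Q := by
    have := congrArg (Nat.cast : ℕ → ℤ) (succ_mul_catalan_eq_centralBinom (m + 1)); push_cast at this; linarith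
  have h3 : ((k : ℤ) + 1) * B = 2 * (2 * k + 1) * A := by
    have := congrArg (Nat.cast : ℕ → ℤ) (Nat.succ_mul_centralBinom_succ k); push_cast at this; linarith
  have h4 : ((m : ℤ) + 2) * R = 2 * (2 * m + 3) * Q := by
    have := congrArg (Nat.cast : ℕ → ℤ) (Nat.succ_mul_centralBinom_succ (m + 1))
    push_cast at this; linarith
  have h3m : ((m : ℤ) + 1) * Q = 2 * (2 * m + 1) * P := by
    have := congrArg (Nat.cast : ℕ → ℤ) (Nat.succ_mul_centralBinom_succ m); push_cast at this; linarith
  have hQ : Q = 2 * (2 * m + 1) * c := by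
    have hm1 : ((m : ℤ) + 1) ≠ 0 := by positivity
    have : ((m : ℤ) + 1) * Q = ((m : ℤ) + 1) * (2 * (2 * m + 1) * c) := by
      rw [h3m, ← h1]; ring
    exact mul_left_cancel₀ hm1 this
  have h5 : ((m : ℤ) + 2) * d = 2 * (2 * m + 1) * c := by rw [h2, hQ]
  have hE2 : ((m : ℤ) + 2) *
      (((k : ℤ) + m + 2) * (A * R) + 2 * ((k : ℤ) + 1) * B * c + 2 * (k : ℤ) * A * d
        - 16 * ((k : ℤ) + m + 1) * (A * P)) = 0 := by
    linear_combination (((k : ℤ) + m + 2) * A) * h4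
      + (((k : ℤ) + m + 2) * A * 2 * (2 * (m : ℤ) + 3)) * hQ
      + (2 * c * ((m : ℤ) + 2)) * h3
      + (2 * (k : ℤ) * A) * h5
      + (16 * ((k : ℤ) + m + 1) * ((m : ℤ) + 2) * A) * h1
  have hm2 : ((m : ℤ) + 2) ≠ 0 := by positivity
  have E : ((k : ℤ) + m + 2) * (A * R) + 2 * ((k : ℤ) + 1) * B * c + 2 * (k : ℤ) * A * d
      - 16 * ((k : ℤ) + m + 1) * (A * P) = 0 := by
    rcases mul_eq_zero.mp hE2 with h | h
    · exact absurd h hm2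
    · exact h
  linear_combination ((-1 : ℤ) ^ k) * E

private lemma S_rec (n : ℕ) : ((n : ℤ) + 2) * S (n + 2) = 16 * ((n : ℤ) + 1) * S n := by
  have hsplit : S (n + 2)
      = (∑ k ∈ Finset.range (n + 1),
          (-1 : ℤ) ^ k * (Nat.centralBinom k : ℤ) * (Nat.centralBinom (n + 2 - k) : ℤ))
        + (-1) ^ (n + 1) * (Nat.centralBinom (n + 1) : ℤ) * (Nat.centralBinom 1 : ℤ)
        + (-1) ^ (n + 2) * (Nat.centralBinom (n + 2) : ℤ) * (Nat.centralBinom 0 : ℤ) := by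
    rw [S, Finset.sum_range_succ, Finset.sum_range_succ,
      show n + 2 - (n + 1) = 1 from by omega, show n + 2 - (n + 2) = 0 from by omega]
  have hmain : ∑ k ∈ Finset.range (n + 1),
      ((n : ℤ) + 2) * ((-1 : ℤ) ^ k * (Nat.centralBinom k : ℤ) * (Nat.centralBinom (n + 2 - k) : ℤ))
      = ∑ k ∈ Finset.range (n + 1),
        (16 * ((n : ℤ) + 1) * ((-1 : ℤ) ^ k * (Nat.centralBinom k : ℤ) * (Nat.centralBinom (n - k) : ℤ))
          + (g n (k + 1) - g n k)) := by
    apply Finset.sum_congr rfl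
    intro k hk
    have hk' : k ≤ n := by simpa [Nat.lt_succ_iff] using hk
    set m := n - k with hm
    have e1 : n + 2 - k = m + 2 := by omega
    have e2 : n + 1 - k = m + 1 := by omega
    have e3 : n + 1 - (k + 1) = m := by omega
    have e4 : (n : ℤ) = (k : ℤ) + m := by
      have : n = k + m := by omega
      exact_mod_cast congrArg (Nat.cast : ℕ → ℤ) this
    rw [e1, g, g, e2, e3, e4]
    have := key_s10 k m
    push_cast at this ⊢
    linarith
  have htele : ∑ k ∈ Finset.range (n + 1), (g n (k + 1) - g n k)
      = g n (n + 1) - g n 0 := Finset.sum_range_sub (g n) (n + 1)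
  have hg0 : g n 0 = 0 := by simp [g]
  have hgn : g n (n + 1)
      = 2 * ((n : ℤ) + 1) * (-1) ^ (n + 1) * (Nat.centralBinom (n + 1) : ℤ) := by
    rw [g, show n + 1 - (n + 1) = 0 from by omega, catalan_zero]
    push_cast
    ring
  have hrec : ((n : ℤ) + 2) * (Nat.centralBinom (n + 2) : ℤ)
      = 2 * (2 * (n : ℤ) + 3) * (Nat.centralBinom (n + 1) : ℤ) := by
    have := congrArg (Nat.cast : ℕ → ℤ) (Nat.succ_mul_centralBinom_succ (n + 1))
    push_cast at this; linarith
  have hS : 16 * ((n : ℤ) + 1) * S n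
      = ∑ k ∈ Finset.range (n + 1),
        16 * ((n : ℤ) + 1) * ((-1 : ℤ) ^ k * (Nat.centralBinom k : ℤ) * (Nat.centralBinom (n - k) : ℤ)) := by
    rw [S, Finset.mul_sum]
  rw [hsplit]
  have hexp : ((n : ℤ) + 2) *
      ((∑ k ∈ Finset.range (n + 1),
          (-1 : ℤ) ^ k * (Nat.centralBinom k : ℤ) * (Nat.centralBinom (n + 2 - k) : ℤ))
        + (-1) ^ (n + 1) * (Nat.centralBinom (n + 1) : ℤ) * (Nat.centralBinom 1 : ℤ)
        + (-1) ^ (n + 2) * (Nat.centralBinom (n + 2) : ℤ) * (Nat.centralBinom 0 : ℤ))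
      = (∑ k ∈ Finset.range (n + 1),
          ((n : ℤ) + 2) * ((-1 : ℤ) ^ k * (Nat.centralBinom k : ℤ) * (Nat.centralBinom (n + 2 - k) : ℤ)))
        + ((n : ℤ) + 2) * ((-1) ^ (n + 1) * (Nat.centralBinom (n + 1) : ℤ) * (Nat.centralBinom 1 : ℤ))
        + ((n : ℤ) + 2) * ((-1) ^ (n + 2) * (Nat.centralBinom (n + 2) : ℤ) * (Nat.centralBinom 0 : ℤ)) := by
    rw [mul_add, mul_add, Finset.mul_sum]
  rw [hexp, hmain, Finset.sum_add_distrib, htele, hg0, hgn, ← hS]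
  have hcb1 : (Nat.centralBinom 1 : ℤ) = 2 := by norm_num [Nat.centralBinom]
  have hcb0 : (Nat.centralBinom 0 : ℤ) = 1 := by norm_num [Nat.centralBinom]
  rw [hcb1, hcb0]
  have hsign : (-1 : ℤ) ^ (n + 2) = (-1) ^ n := by ring
  have hsign1 : (-1 : ℤ) ^ (n + 1) = -(-1) ^ n := by ring
  rw [hsign, hsign1]
  linear_combination ((-1 : ℤ) ^ n) * hrec

private lemma S_closed : ∀ n : ℕ, S n = if Even n then 2 ^ n * (n.choose (n / 2) : ℤ) else 0 := by
  intro n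
  induction n using Nat.twoStepInduction with
  | zero => simp [S, Nat.centralBinom]
  | one =>
    have : ¬ Even 1 := by decide
    simp [S, Finset.sum_range_succ, Nat.centralBinom, this]
  | more n ih _ =>
    have hrec := S_rec n
    have hpar : Even (n + 2) ↔ Even n := by
      constructor
      · intro h; rcases h with ⟨r, hr⟩; exact ⟨r - 1, by omega⟩
      · intro h; rcases h with ⟨r, hr⟩; exact ⟨r + 1, by omega⟩
    by_cases h : Even n
    · rw [ih, if_pos h] at hrec
      rw [if_pos (hpar.mpr h)]
      obtain ⟨m, hm⟩ := h
      have hd1 : n / 2 = m := by omega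
      have hd2 : (n + 2) / 2 = m + 1 := by omega
      have hc1 : n.choose (n / 2) = Nat.centralBinom m := by
        rw [hd1, Nat.centralBinom, show 2 * m = n from by omega]
      have hc2 : (n + 2).choose ((n + 2) / 2) = Nat.centralBinom (m + 1) := by
        rw [hd2, Nat.centralBinom, show 2 * (m + 1) = n + 2 from by omega]
      rw [hc1] at hrec
      rw [hc2]
      have hcbrec : ((m : ℤ) + 1) * (Nat.centralBinom (m + 1) : ℤ)
          = 2 * (2 * m + 1) * (Nat.centralBinom m : ℤ) := by
        have := congrArg (Nat.cast : ℕ → ℤ) (Nat.succ_mul_centralBinom_succ m)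
        push_cast at this; linarith
      have hn2 : ((n : ℤ) + 2) ≠ 0 := by positivity
      apply mul_left_cancel₀ hn2
      rw [hrec]
      have hnm : (n : ℤ) = 2 * m := by exact_mod_cast congrArg (Nat.cast : ℕ → ℤ) (show n = 2 * m from by omega)
      rw [hnm]
      have : ((2 : ℤ) * m + 2) * (2 ^ (n + 2) * (Nat.centralBinom (m + 1) : ℤ))
          = 2 ^ (n + 2) * (((m : ℤ) + 1) * (Nat.centralBinom (m + 1) : ℤ)) * 2 := by ring
      rw [this, hcbrec]
      ring
    · rw [ih, if_neg h, mul_zero] at hrec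
      rw [if_neg (fun hc => h (hpar.mp hc))]
      have hn2 : ((n : ℤ) + 2) ≠ 0 := by positivity
      exact (mul_eq_zero.mp hrec).resolve_left hn2

theorem alternating_central_binomial_convolution (n : ℕ) :
    ∑ k ∈ Finset.range (n + 1),
      (-1 : ℤ) ^ k * ((2 * k).choose k : ℤ) * ((2 * (n - k)).choose (n - k) : ℤ)
    = if Even n then 2 ^ n * (n.choose (n / 2) : ℤ) else 0 := by
  have := S_closed n
  rw [S] at this
  simpa [Nat.centralBinom] using this
end

section
/- Let n be a nonnegative integer and let v > −1 be a real number. Then ∑_{k=0}^{n} (−1)^k · C(n,k) · B(2k+v, (2k+v)/2) · B(2n−2k+v, (2n−2k+v)/2) · B(n+v, (2k+v)/2)^{−1} equals 2^n · C(n, n/2) · B(v, v/2) · B((n+v)/2, v/2)^{−1} if n is even, and equals 0 if n is odd. -/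
open Real

noncomputable section AuxACG


def poch (c : ℝ) : ℕ → ℝ
  | 0 => 1
  | (k+1) => poch c k * (c + k)

def Tc (c : ℝ) (n : ℕ) : ℝ :=
  ∑ k ∈ Finset.range (n+1), (-1:ℝ)^k * (n.choose k : ℝ) * poch c k * poch c (n-k)

def Uc (c : ℝ) (n : ℕ) : ℝ :=
  ∑ k ∈ Finset.range (n+1), (-1:ℝ)^k * (n.choose k : ℝ) * poch c k * poch c (n-k) * k

lemma neg_one_pow_sub {n k : ℕ} (h : k ≤ n) : (-1:ℝ)^(n-k) = (-1)^n * (-1)^k := by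
  have h1 : (-1:ℝ)^(n-k) * (-1)^k = (-1)^n := by
    rw [← pow_add, Nat.sub_add_cancel h]
  have h2 : ((-1:ℝ)^k) * ((-1:ℝ)^k) = 1 := by
    rw [← pow_add, ← two_mul, pow_mul]; norm_num
  calc (-1:ℝ)^(n-k) = (-1:ℝ)^(n-k) * ((-1:ℝ)^k * (-1:ℝ)^k) := by rw [h2, mul_one]
    _ = ((-1:ℝ)^(n-k) * (-1:ℝ)^k) * (-1:ℝ)^k := by ring
    _ = (-1)^n * (-1)^k := by rw [h1]

lemma T_reflect (c : ℝ) (n : ℕ) : Tc c n = (-1:ℝ)^n * Tc c n := by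
  conv_lhs => rw [Tc, ← Finset.sum_range_reflect]
  rw [Tc, Finset.mul_sum]
  apply Finset.sum_congr rfl
  intro k hk
  have hkn : k ≤ n := Nat.lt_succ_iff.mp (Finset.mem_range.mp hk)
  have h1 : n + 1 - 1 - k = n - k := by omega
  have h2 : n - (n - k) = k := by omega
  rw [h1, h2, Nat.choose_symm hkn, neg_one_pow_sub hkn]
  ring

lemma T_odd (c : ℝ) (n : ℕ) (h : Odd n) : Tc c n = 0 := by
  have := T_reflect c n
  rw [Odd.neg_one_pow h] at this
  linarith

lemma U_even (c : ℝ) (n : ℕ) (h : Even n) : 2 * Uc c n = n * Tc c n := by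
  have hrefl : Uc c n =
      ∑ k ∈ Finset.range (n+1), (-1:ℝ)^k * (n.choose k : ℝ) * poch c k * poch c (n-k) * ((n:ℝ) - k) := by
    conv_lhs => rw [Uc, ← Finset.sum_range_reflect]
    apply Finset.sum_congr rfl
    intro k hk
    have hkn : k ≤ n := Nat.lt_succ_iff.mp (Finset.mem_range.mp hk)
    have h1 : n + 1 - 1 - k = n - k := by omega
    have h2 : n - (n - k) = k := by omega
    rw [h1, h2, Nat.choose_symm hkn, neg_one_pow_sub hkn, Even.neg_one_pow h,
      Nat.cast_sub hkn]
    ring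
  have hsplit : ∑ k ∈ Finset.range (n+1),
      (-1:ℝ)^k * (n.choose k : ℝ) * poch c k * poch c (n-k) * ((n:ℝ) - k)
      = n * Tc c n - Uc c n := by
    rw [Tc, Uc, Finset.mul_sum, ← Finset.sum_sub_distrib]
    apply Finset.sum_congr rfl
    intro k _; ring
  rw [hrefl, hsplit] at *
  linarith [hrefl]

lemma T_succ (c : ℝ) (n : ℕ) : Tc c (n+1) = (n:ℝ) * Tc c n - 2 * Uc c n := by
  have key : Tc c (n+1) = ∑ k ∈ Finset.range (n+1),
      (-1:ℝ)^k * (n.choose k : ℝ) * poch c k * poch c (n-k) * ((n:ℝ) - 2*k) := by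
    have hA : Tc c (n+1)
        = (∑ k ∈ Finset.range (n+2), (-1:ℝ)^k * (n.choose k : ℝ) * poch c k * poch c (n+1-k))
          + ∑ k ∈ Finset.range (n+1), (-1:ℝ)^(k+1) * (n.choose k : ℝ) * poch c (k+1) * poch c (n-k) := by
      rw [Tc]
      have step : ∀ k ∈ Finset.range (n+2),
          (-1:ℝ)^k * ((n+1).choose k : ℝ) * poch c k * poch c (n+1-k)
          = ((-1:ℝ)^k * (n.choose k : ℝ) * poch c k * poch c (n+1-k))
            + (if k = 0 then 0 else
                (-1:ℝ)^k * (n.choose (k-1) : ℝ) * poch c k * poch c (n+1-k)) := by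
        intro k _
        match k with
        | 0 => simp
        | (j+1) =>
          rw [if_neg (by omega), Nat.choose_succ_succ, Nat.add_sub_cancel]
          push_cast
          ring
      rw [Finset.sum_congr rfl step, Finset.sum_add_distrib]
      congr 1
      rw [Finset.sum_range_succ' _ (n+1)]
      norm_num
      apply Finset.sum_congr rfl
      intro k _
      have : n + 1 - (k + 1) = n - k := by omega
      rw [this]
    rw [hA]
    have hA1 : (∑ k ∈ Finset.range (n+2), (-1:ℝ)^k * (n.choose k : ℝ) * poch c k * poch c (n+1-k))
        = ∑ k ∈ Finset.range (n+1), (-1:ℝ)^k * (n.choose k : ℝ) * poch c k * poch c (n+1-k) := by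
      rw [Finset.sum_range_succ, Nat.choose_succ_self]
      simp
    rw [hA1, ← Finset.sum_add_distrib]
    apply Finset.sum_congr rfl
    intro k hk
    have hkn : k ≤ n := Nat.lt_succ_iff.mp (Finset.mem_range.mp hk)
    have h1 : n + 1 - k = (n - k) + 1 := by omega
    rw [h1, poch, poch, Nat.cast_sub hkn]
    push_cast
    ring
  rw [key, Tc, Uc, Finset.mul_sum, Finset.mul_sum, ← Finset.sum_sub_distrib]
  apply Finset.sum_congr rfl
  intro k _; ring

lemma U_succ (c : ℝ) (n : ℕ) : Uc c (n+1) = -((n:ℝ)+1) * (c * Tc c n + Uc c n) := by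
  rw [Uc, Finset.sum_range_succ' _ (n+1)]
  have step : ∀ k ∈ Finset.range (n+1),
      (-1:ℝ)^(k+1) * ((n+1).choose (k+1) : ℝ) * poch c (k+1) * poch c (n+1-(k+1)) * ((k+1 : ℕ):ℝ)
      = -((n:ℝ)+1) * ((-1:ℝ)^k * (n.choose k : ℝ) * poch c k * poch c (n-k) * (c + k)) := by
    intro k _
    have hch : ((n:ℝ)+1) * (n.choose k : ℝ) = ((n+1).choose (k+1) : ℝ) * ((k:ℝ)+1) := by
      exact_mod_cast congrArg (Nat.cast : ℕ → ℝ) (Nat.add_one_mul_choose_eq n k)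
    have h1 : n + 1 - (k+1) = n - k := by omega
    rw [h1, poch]
    push_cast
    linear_combination ((-1:ℝ)^k * poch c k * poch c (n-k) * (c + (k:ℝ))) * hch
  rw [Finset.sum_congr rfl step]
  norm_num
  rw [Tc, Uc, Finset.mul_sum, ← Finset.sum_add_distrib, Finset.mul_sum]
  apply Finset.sum_congr rfl
  intro k _; ring

lemma T_even (c : ℝ) (m : ℕ) :
    Tc c (2*m) = ((2*m).choose m : ℝ) * (m.factorial : ℝ) * poch c m := by
  induction m with
  | zero => simp [Tc, poch]
  | succ m ih =>
    have h2 : 2 * (m+1) = (2*m+1) + 1 := by ring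
    have hodd : Tc c (2*m+1) = 0 := T_odd c _ ⟨m, by ring⟩
    have hU2 : 2 * Uc c (2*m) = (2*m : ℕ) * Tc c (2*m) := U_even c (2*m) ⟨m, by ring⟩
    have hstep : Tc c (2*(m+1)) = 2*((2*m:ℝ)+1) * (c + m) * Tc c (2*m) := by
      rw [h2, T_succ, U_succ]
      push_cast
      push_cast at hU2
      linear_combination (2*(m:ℝ)+1)*hodd + (2*(m:ℝ)+1)*hU2
    rw [hstep, ih]
    have hch : ((m:ℝ)+1) * ((2*(m+1)).choose (m+1) : ℝ) = 2*(2*(m:ℝ)+1) * ((2*m).choose m : ℝ) := by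
      have e1 : (2*m+1) * (2*m).choose m = (2*m+1).choose (m+1) * (m+1) := Nat.add_one_mul_choose_eq (2*m) m
      have e2 : (2*(m+1)).choose (m+1) = (2*m+1).choose m + (2*m+1).choose (m+1) := by
        have : 2*(m+1) = (2*m+1)+1 := by ring
        rw [this, Nat.choose_succ_succ']
      have e3 : (2*m+1).choose m = (2*m+1).choose (m+1) := by
        have := Nat.choose_symm (show m+1 ≤ 2*m+1 by omega)
        simpa [show 2*m+1-(m+1) = m by omega] using this
      have e4 : (m+1) * ((2*(m+1)).choose (m+1)) = 2*((2*m+1) * ((2*m).choose m)) := by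
        rw [e2, e3, e1]; ring
      have := congrArg (Nat.cast : ℕ → ℝ) e4
      push_cast at this
      linarith
    have hfac : ((m+1).factorial : ℝ) = ((m:ℝ)+1) * (m.factorial : ℝ) := by
      push_cast [Nat.factorial_succ]; ring
    have hpoch : poch c (m+1) = poch c m * (c + m) := rfl
    rw [hpoch, hfac]
    linear_combination (-(c+(m:ℝ)) * (m.factorial:ℝ) * poch c m) * hch

lemma poch_pos {c : ℝ} (hc : 0 < c) (k : ℕ) : 0 < poch c k := by
  induction k with
  | zero => norm_num [poch]
  | succ k ih => rw [poch]; positivity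

lemma Gamma_poch {c : ℝ} (hc : 0 < c) (k : ℕ) :
    Real.Gamma (c + k) = poch c k * Real.Gamma c := by
  induction k with
  | zero => simp [poch]
  | succ k ih =>
    have h1 : c + ((k:ℝ)+1) = (c + k) + 1 := by ring
    have h2 : c + (k:ℝ) ≠ 0 := by positivity
    push_cast
    rw [h1, Real.Gamma_add_one h2, ih, poch]
    ring

lemma gbinom_half {x : ℝ} (hx : -1 < x) :
    gbinom x (x/2) = Real.Gamma ((x+1)/2) * (2:ℝ)^x / (Real.sqrt π * Real.Gamma (x/2+1)) := by
  have dup := Real.Gamma_mul_Gamma_add_half ((x+1)/2)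
  have e1 : (x+1)/2 + 1/2 = x/2 + 1 := by ring
  have e2 : 2 * ((x+1)/2) = x + 1 := by ring
  have e3 : 1 - (x+1) = -x := by ring
  rw [e1, e2, e3] at dup
  have hsp : Real.sqrt π ≠ 0 := (Real.sqrt_pos.mpr Real.pi_pos).ne'
  have hinv : (2:ℝ)^(-x) * (2:ℝ)^x = 1 := by
    rw [← Real.rpow_add two_pos]; simp
  have hG : Real.Gamma (x+1) = Real.Gamma ((x+1)/2) * Real.Gamma (x/2+1) * (2:ℝ)^x / Real.sqrt π := by
    rw [dup]
    have : Real.Gamma (x+1) * (2:ℝ)^(-x) * Real.sqrt π * (2:ℝ)^x / Real.sqrt π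
        = Real.Gamma (x+1) * ((2:ℝ)^(-x) * (2:ℝ)^x) * (Real.sqrt π / Real.sqrt π) := by ring
    rw [this, hinv, div_self hsp, mul_one, mul_one]
  rw [gbinom, hG]
  have hx2 : x - x/2 = x/2 := by ring
  rw [hx2]
  have hG2 : Real.Gamma (x/2+1) ≠ 0 := by
    have : (0:ℝ) < x/2 + 1 := by linarith
    exact (Real.Gamma_pos_of_pos this).ne'
  have key : Real.Gamma ((x+1)/2) * Real.Gamma (x/2+1) * (2:ℝ)^x / Real.sqrt π
        / (Real.Gamma (x/2+1) * Real.Gamma (x/2+1))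
      = Real.Gamma ((x+1)/2) * (2:ℝ)^x / (Real.sqrt π * Real.Gamma (x/2+1))
        * (Real.Gamma (x/2+1) / Real.Gamma (x/2+1)) := by ring
  rw [key, div_self hG2, mul_one]


lemma scalar_final (B D Gc Gv2 Gmv sp PI C fm pm : ℝ) (hpi : PI = sp*sp)
    (hGv2 : Gv2 ≠ 0) (hGmv : Gmv ≠ 0) (hsp : sp ≠ 0) (hpm : pm ≠ 0) (hGc : Gc ≠ 0)
    (hB : B ≠ 0) (hD : D ≠ 0) :
    (B*D) * (B*D) * Gc^2 / (PI * (pm * Gc * Gmv * (B*D) / sp)) * (C * fm * pm)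
    = B * C * (Gc * D / (sp * Gv2)) * (Gv2 * fm / Gmv) := by
  subst hpi
  field_simp

set_option maxHeartbeats 1000000 in
theorem alternating_convolution_generalization (n : ℕ) (v : ℝ) (hv : v > -1) :
    ∑ k ∈ Finset.range (n + 1),
      (-1 : ℝ) ^ k * (n.choose k : ℝ) * gbinom (2 * (k : ℝ) + v) ((2 * (k : ℝ) + v) / 2) *
        gbinom (2 * (n : ℝ) - 2 * (k : ℝ) + v) ((2 * (n : ℝ) - 2 * (k : ℝ) + v) / 2) *
        (gbinom ((n : ℝ) + v) ((2 * (k : ℝ) + v) / 2))⁻¹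
    = if Even n then
        (2 : ℝ) ^ n * (n.choose (n / 2) : ℝ) * gbinom v (v / 2) *
          (gbinom (((n : ℝ) + v) / 2) (v / 2))⁻¹
      else 0 := by
  set c : ℝ := (v+1)/2 with hc_def
  have hc : 0 < c := by rw [hc_def]; linarith
  have hsp : (0:ℝ) < Real.sqrt π := Real.sqrt_pos.mpr Real.pi_pos
  have hGc : (0:ℝ) < Real.Gamma c := Real.Gamma_pos_of_pos hc
  have hGN : (0:ℝ) < Real.Gamma ((n:ℝ)+v+1) := by
    apply Real.Gamma_pos_of_pos
    have : (0:ℝ) ≤ (n:ℝ) := Nat.cast_nonneg n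
    linarith
  have hsum : ∑ k ∈ Finset.range (n + 1),
      (-1 : ℝ) ^ k * (n.choose k : ℝ) * gbinom (2 * (k : ℝ) + v) ((2 * (k : ℝ) + v) / 2) *
        gbinom (2 * (n : ℝ) - 2 * (k : ℝ) + v) ((2 * (n : ℝ) - 2 * (k : ℝ) + v) / 2) *
        (gbinom ((n : ℝ) + v) ((2 * (k : ℝ) + v) / 2))⁻¹
      = ((2:ℝ)^(2*(n:ℝ)+2*v) * (Real.Gamma c)^2 / (π * Real.Gamma ((n:ℝ)+v+1))) * Tc c n := by
    rw [Tc, Finset.mul_sum]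
    apply Finset.sum_congr rfl
    intro k hk
    have hkn : k ≤ n := Nat.lt_succ_iff.mp (Finset.mem_range.mp hk)
    have hknR : (k:ℝ) ≤ (n:ℝ) := Nat.cast_le.mpr hkn
    have hk0 : (0:ℝ) ≤ (k:ℝ) := Nat.cast_nonneg k
    have hG1 : (0:ℝ) < Real.Gamma ((k:ℝ)+v/2+1) := by
      apply Real.Gamma_pos_of_pos; linarith
    have hG2 : (0:ℝ) < Real.Gamma ((n:ℝ)-(k:ℝ)+v/2+1) := by
      apply Real.Gamma_pos_of_pos; linarith
    have e1 : gbinom (2*(k:ℝ)+v) ((2*(k:ℝ)+v)/2)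
        = poch c k * Real.Gamma c * (2:ℝ)^(2*(k:ℝ)+v) / (Real.sqrt π * Real.Gamma ((k:ℝ)+v/2+1)) := by
      rw [gbinom_half (by linarith : (-1:ℝ) < 2*(k:ℝ)+v)]
      rw [show (2*(k:ℝ)+v+1)/2 = c + (k:ℝ) by rw [hc_def]; ring,
          show (2*(k:ℝ)+v)/2+1 = (k:ℝ)+v/2+1 by ring, Gamma_poch hc]
    have e2 : gbinom (2*(n:ℝ)-2*(k:ℝ)+v) ((2*(n:ℝ)-2*(k:ℝ)+v)/2)
        = poch c (n-k) * Real.Gamma c * (2:ℝ)^(2*(n:ℝ)-2*(k:ℝ)+v)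
          / (Real.sqrt π * Real.Gamma ((n:ℝ)-(k:ℝ)+v/2+1)) := by
      rw [gbinom_half (by linarith : (-1:ℝ) < 2*(n:ℝ)-2*(k:ℝ)+v)]
      rw [show (2*(n:ℝ)-2*(k:ℝ)+v+1)/2 = c + ((n-k : ℕ):ℝ) by
            rw [Nat.cast_sub hkn, hc_def]; ring,
          show (2*(n:ℝ)-2*(k:ℝ)+v)/2+1 = (n:ℝ)-(k:ℝ)+v/2+1 by ring, Gamma_poch hc]
    have e3 : (gbinom ((n:ℝ)+v) ((2*(k:ℝ)+v)/2))⁻¹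
        = Real.Gamma ((k:ℝ)+v/2+1) * Real.Gamma ((n:ℝ)-(k:ℝ)+v/2+1) / Real.Gamma ((n:ℝ)+v+1) := by
      rw [gbinom,
          show (n:ℝ)+v - (2*(k:ℝ)+v)/2 + 1 = (n:ℝ)-(k:ℝ)+v/2+1 by ring,
          show (2*(k:ℝ)+v)/2+1 = (k:ℝ)+v/2+1 by ring, inv_div]
    have hPQ : (2:ℝ)^(2*(k:ℝ)+v) * (2:ℝ)^(2*(n:ℝ)-2*(k:ℝ)+v) = (2:ℝ)^(2*(n:ℝ)+2*v) := by
      rw [← Real.rpow_add two_pos]; ring_nf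
    rw [e1, e2, e3]
    calc (-1:ℝ)^k * (n.choose k : ℝ)
          * (poch c k * Real.Gamma c * (2:ℝ)^(2*(k:ℝ)+v) / (Real.sqrt π * Real.Gamma ((k:ℝ)+v/2+1)))
          * (poch c (n-k) * Real.Gamma c * (2:ℝ)^(2*(n:ℝ)-2*(k:ℝ)+v)
              / (Real.sqrt π * Real.Gamma ((n:ℝ)-(k:ℝ)+v/2+1)))
          * (Real.Gamma ((k:ℝ)+v/2+1) * Real.Gamma ((n:ℝ)-(k:ℝ)+v/2+1) / Real.Gamma ((n:ℝ)+v+1))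
        = (((2:ℝ)^(2*(k:ℝ)+v) * (2:ℝ)^(2*(n:ℝ)-2*(k:ℝ)+v)) * (Real.Gamma c)^2
            / ((Real.sqrt π * Real.sqrt π) * Real.Gamma ((n:ℝ)+v+1)))
          * ((-1:ℝ)^k * (n.choose k : ℝ) * poch c k * poch c (n-k))
          * ((Real.Gamma ((k:ℝ)+v/2+1) / Real.Gamma ((k:ℝ)+v/2+1))
              * (Real.Gamma ((n:ℝ)-(k:ℝ)+v/2+1) / Real.Gamma ((n:ℝ)-(k:ℝ)+v/2+1))) := by
          ring
      _ = (2:ℝ)^(2*(n:ℝ)+2*v) * (Real.Gamma c)^2 / (π * Real.Gamma ((n:ℝ)+v+1))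
          * ((-1:ℝ)^k * (n.choose k : ℝ) * poch c k * poch c (n-k)) := by
          rw [hPQ, div_self hG1.ne', div_self hG2.ne', Real.mul_self_sqrt Real.pi_pos.le]
          ring
  rw [hsum]
  by_cases hev : Even n
  · rw [if_pos hev]
    obtain ⟨m, hm⟩ := hev
    have hn2 : n = 2*m := by omega
    have hnd : n / 2 = m := by omega
    subst hn2
    rw [hnd, T_even]
    have hcast : ((2*m:ℕ):ℝ) = 2*(m:ℝ) := by push_cast; ring
    rw [hcast]
    have hGv2 : (0:ℝ) < Real.Gamma (v/2+1) := by
      apply Real.Gamma_pos_of_pos; linarith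
    have hm0 : (0:ℝ) ≤ (m:ℝ) := Nat.cast_nonneg m
    have hGmv : (0:ℝ) < Real.Gamma ((m:ℝ)+v/2+1) := by
      apply Real.Gamma_pos_of_pos; linarith
    have eR1 : gbinom v (v/2) = Real.Gamma c * (2:ℝ)^v / (Real.sqrt π * Real.Gamma (v/2+1)) := by
      rw [gbinom_half hv, hc_def]
    have eR2 : (gbinom ((2*(m:ℝ)+v)/2) (v/2))⁻¹
        = Real.Gamma (v/2+1) * (m.factorial : ℝ) / Real.Gamma ((m:ℝ)+v/2+1) := by
      rw [gbinom,
          show (2*(m:ℝ)+v)/2 - v/2 + 1 = (m:ℝ)+1 by ring,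
          show (2*(m:ℝ)+v)/2 + 1 = (m:ℝ)+v/2+1 by ring, inv_div,
          Real.Gamma_nat_eq_factorial]
    have dup2 := Real.Gamma_mul_Gamma_add_half ((m:ℝ)+c)
    rw [show (m:ℝ)+c+1/2 = (m:ℝ)+v/2+1 by rw [hc_def]; ring,
        show 2*((m:ℝ)+c) = 2*(m:ℝ)+v+1 by rw [hc_def]; ring,
        show (1:ℝ)-(2*(m:ℝ)+v+1) = -(2*(m:ℝ)+v) by ring,
        show (m:ℝ)+c = c+(m:ℝ) from add_comm _ _, Gamma_poch hc] at dup2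
    have hinv : (2:ℝ)^(-(2*(m:ℝ)+v)) * (2:ℝ)^(2*(m:ℝ)+v) = 1 := by
      rw [← Real.rpow_add two_pos, show -(2*(m:ℝ)+v) + (2*(m:ℝ)+v) = 0 by ring, Real.rpow_zero]
    have hGNval : Real.Gamma (2*(m:ℝ)+v+1)
        = poch c m * Real.Gamma c * Real.Gamma ((m:ℝ)+v/2+1) * (2:ℝ)^(2*(m:ℝ)+v) / Real.sqrt π := by
      have h1 : Real.Gamma (2*(m:ℝ)+v+1)
          = (Real.Gamma (2*(m:ℝ)+v+1) * (2:ℝ)^(-(2*(m:ℝ)+v)) * Real.sqrt π)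
            * (2:ℝ)^(2*(m:ℝ)+v) / Real.sqrt π := by
        rw [show (Real.Gamma (2*(m:ℝ)+v+1) * (2:ℝ)^(-(2*(m:ℝ)+v)) * Real.sqrt π)
              * (2:ℝ)^(2*(m:ℝ)+v) / Real.sqrt π
            = Real.Gamma (2*(m:ℝ)+v+1) * ((2:ℝ)^(-(2*(m:ℝ)+v)) * (2:ℝ)^(2*(m:ℝ)+v))
              * (Real.sqrt π / Real.sqrt π) from by ring,
          hinv, div_self hsp.ne', mul_one, mul_one]
      rw [h1, ← dup2]
    rw [eR1, eR2, hGNval]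
    have hpow2 : (2:ℝ)^(2*(2*(m:ℝ))+2*v) = ((2:ℝ)^(2*(m:ℝ)+v)) * ((2:ℝ)^(2*(m:ℝ)+v)) := by
      rw [← Real.rpow_add two_pos]; ring_nf
    have hpown : ((2:ℝ)^(2*m : ℕ) : ℝ) * (2:ℝ)^v = (2:ℝ)^(2*(m:ℝ)+v) := by
      rw [← Real.rpow_natCast (2:ℝ) (2*m), ← Real.rpow_add two_pos]
      push_cast; ring_nf
    have hpi : π = Real.sqrt π * Real.sqrt π := (Real.mul_self_sqrt Real.pi_pos.le).symm
    have hpm : (0:ℝ) < poch c m := poch_pos hc m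
    have hP : (0:ℝ) < (2:ℝ)^(2*(m:ℝ)+v) := Real.rpow_pos_of_pos two_pos _
    rw [hpow2, ← hpown]
    have hB : ((2:ℝ)^(2*m) : ℝ) ≠ 0 := by positivity
    have hD : ((2:ℝ)^v : ℝ) ≠ 0 := (Real.rpow_pos_of_pos two_pos v).ne'
    linear_combination scalar_final ((2:ℝ)^(2*m)) ((2:ℝ)^v) (Real.Gamma c) (Real.Gamma (v/2+1))
      (Real.Gamma ((m:ℝ)+v/2+1)) (Real.sqrt π) π (((2*m).choose m : ℝ)) ((m.factorial : ℝ))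
      (poch c m) hpi hGv2.ne' hGmv.ne' hsp.ne' hpm.ne' hGc.ne' hB hD
  · rw [if_neg hev, T_odd c n (Nat.not_even_iff_odd.mp hev), mul_zero]

end AuxACG
end

section
/- Let s, n, m, r be nonnegative integers, let f, g : ℕ → ℝ be sequences, and let p, q : ℕ → ℕ be sequences of nonnegative integers. Suppose that for every real number t, ∑_{k=s}^{n} f(k) · (1+t)^{p(k)} = ∑_{k=m}^{r} g(k) · t^{q(k)}. Then for all real numbers u > −1 and v > −1, ∑_{k=s}^{n} f(k) · B(p(k)+u+v+1, u+1)^{−1} = ((u+1)/(v+1)) · ∑_{k=m}^{r} (−1)^{q(k)} · g(k) · B(q(k)+u+v+1, v+1)^{−1}. -/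
open Real

/-- The beta-type integrand, as a function of real parameters. -/
noncomputable def Faux (a b : ℝ) (x : ℝ) : ℂ :=
  (x : ℂ) ^ ((a : ℂ) - 1) * (1 - (x : ℂ)) ^ ((b : ℂ) - 1)

lemma Faux_intble {a b : ℝ} (ha : 0 < a) (hb : 0 < b) :
    IntervalIntegrable (Faux a b) MeasureTheory.volume 0 1 := by
  have := Complex.betaIntegral_convergent (u := (a : ℂ)) (v := (b : ℂ))
    (by simpa using ha) (by simpa using hb)
  exact this

lemma Faux_integral {a b : ℝ} (ha : 0 < a) (hb : 0 < b) :
    ∫ x in (0:ℝ)..1, Faux a b x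
      = ((Real.Gamma a * Real.Gamma b / Real.Gamma (a + b) : ℝ) : ℂ) := by
  have h := Complex.Gamma_mul_Gamma_eq_betaIntegral (s := (a : ℂ)) (t := (b : ℂ))
    (by simpa using ha) (by simpa using hb)
  have hne : Complex.Gamma ((a : ℂ) + (b : ℂ)) ≠ 0 :=
    Complex.Gamma_ne_zero_of_re_pos (by simp [Complex.add_re]; positivity)
  have hbeta : Complex.betaIntegral (a : ℂ) (b : ℂ)
      = Complex.Gamma a * Complex.Gamma b / Complex.Gamma ((a : ℂ) + (b : ℂ)) := by
    rw [eq_div_iff hne]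
    linear_combination -h
  have : (∫ x in (0:ℝ)..1, Faux a b x) = Complex.betaIntegral (a : ℂ) (b : ℂ) := by
    simp [Faux, Complex.betaIntegral]
  rw [this, hbeta, show ((a : ℂ) + (b : ℂ)) = (((a + b : ℝ)) : ℂ) by push_cast; ring,
    Complex.Gamma_ofReal, Complex.Gamma_ofReal, Complex.Gamma_ofReal]
  push_cast
  ring

lemma aux_scale {a b c X : ℝ} (hb : b ≠ 0) : a / b * (c * (b * X)) = a * (c * X) := by
  field_simp

theorem combinatorial_from_polynomial (s n m r : ℕ) (f g : ℕ → ℝ) (p q : ℕ → ℕ)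
    (hP : ∀ t : ℝ,
      ∑ k ∈ Finset.Icc s n, f k * (1 + t) ^ (p k) = ∑ k ∈ Finset.Icc m r, g k * t ^ (q k))
    (u v : ℝ) (hu : u > -1) (hv : v > -1) :
    ∑ k ∈ Finset.Icc s n, f k * (gbinom ((p k : ℝ) + u + v + 1) (u + 1))⁻¹
    = (u + 1) / (v + 1) *
        ∑ k ∈ Finset.Icc m r,
          (-1 : ℝ) ^ (q k) * g k * (gbinom ((q k : ℝ) + u + v + 1) (v + 1))⁻¹ := by
  have hu1 : (0:ℝ) < u + 1 := by linarith
  have hv1 : (0:ℝ) < v + 1 := by linarith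
  have hpv : ∀ k : ℕ, (0:ℝ) < (k : ℝ) + v + 1 := fun k => by
    have := Nat.cast_nonneg (α := ℝ) k; linarith
  have hqu : ∀ k : ℕ, (0:ℝ) < (k : ℝ) + u + 1 := fun k => by
    have := Nat.cast_nonneg (α := ℝ) k; linarith
  -- pointwise identity on (0,1)
  have key : ∀ x ∈ Set.Ioo (0:ℝ) 1,
      ∑ k ∈ Finset.Icc s n, (f k : ℂ) * Faux (u + 1) ((p k : ℝ) + v + 1) x
        = ∑ k ∈ Finset.Icc m r, (-1 : ℂ) ^ (q k) * (g k : ℂ)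
            * Faux ((q k : ℝ) + u + 1) (v + 1) x := by
    intro x hx
    obtain ⟨hxl, hxr⟩ := hx
    have hx0 : (x : ℂ) ≠ 0 := Complex.ofReal_ne_zero.mpr hxl.ne'
    have hx1 : (1 : ℂ) - (x : ℂ) ≠ 0 := by
      rw [show (1:ℂ) - x = ((1 - x : ℝ) : ℂ) by push_cast; ring]
      exact Complex.ofReal_ne_zero.mpr (by linarith)
    have h1 : ∑ k ∈ Finset.Icc s n, (f k : ℂ) * ((1:ℂ) - x) ^ (p k)
        = ∑ k ∈ Finset.Icc m r, (g k : ℂ) * (-(x:ℂ)) ^ (q k) := by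
      have h0 := congrArg (fun y : ℝ => (y : ℂ)) (hP (-x))
      push_cast at h0
      simpa [sub_eq_add_neg] using h0
    calc
      ∑ k ∈ Finset.Icc s n, (f k : ℂ) * Faux (u + 1) ((p k : ℝ) + v + 1) x
          = (∑ k ∈ Finset.Icc s n, (f k : ℂ) * ((1:ℂ) - x) ^ (p k))
              * ((x : ℂ) ^ (u : ℂ) * ((1:ℂ) - x) ^ (v : ℂ)) := by
            rw [Finset.sum_mul]
            refine Finset.sum_congr rfl fun k _ => ?_
            simp only [Faux]
            rw [show (((u + 1 : ℝ)) : ℂ) - 1 = (u : ℂ) by push_cast; ring,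
              show ((((p k : ℝ) + v + 1 : ℝ)) : ℂ) - 1 = ((p k : ℕ) : ℂ) + (v : ℂ) by
                push_cast; ring,
              Complex.cpow_add _ _ hx1, Complex.cpow_natCast]
            ring
      _ = (∑ k ∈ Finset.Icc m r, (g k : ℂ) * (-(x:ℂ)) ^ (q k))
              * ((x : ℂ) ^ (u : ℂ) * ((1:ℂ) - x) ^ (v : ℂ)) := by rw [h1]
      _ = ∑ k ∈ Finset.Icc m r, (-1 : ℂ) ^ (q k) * (g k : ℂ)
              * Faux ((q k : ℝ) + u + 1) (v + 1) x := by
            rw [Finset.sum_mul]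
            refine Finset.sum_congr rfl fun k _ => ?_
            simp only [Faux]
            rw [show ((((q k : ℝ) + u + 1 : ℝ)) : ℂ) - 1 = ((q k : ℕ) : ℂ) + (u : ℂ) by
                push_cast; ring,
              show (((v + 1 : ℝ)) : ℂ) - 1 = (v : ℂ) by push_cast; ring,
              Complex.cpow_add _ _ hx0, Complex.cpow_natCast, neg_pow]
            ring
  -- integrability of each summand
  have hLint : ∀ k ∈ Finset.Icc s n, IntervalIntegrable
      (fun x => (f k : ℂ) * Faux (u + 1) ((p k : ℝ) + v + 1) x)
      MeasureTheory.volume 0 1 :=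
    fun k _ => (Faux_intble hu1 (hpv (p k))).const_mul _
  have hRint : ∀ k ∈ Finset.Icc m r, IntervalIntegrable
      (fun x => (-1 : ℂ) ^ (q k) * (g k : ℂ) * Faux ((q k : ℝ) + u + 1) (v + 1) x)
      MeasureTheory.volume 0 1 :=
    fun k _ => (Faux_intble (hqu (q k)) hv1).const_mul _
  -- equality of the integrals
  have hIeq : (∫ x in (0:ℝ)..1,
        ∑ k ∈ Finset.Icc s n, (f k : ℂ) * Faux (u + 1) ((p k : ℝ) + v + 1) x)
      = ∫ x in (0:ℝ)..1,
        ∑ k ∈ Finset.Icc m r, (-1 : ℂ) ^ (q k) * (g k : ℂ)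
          * Faux ((q k : ℝ) + u + 1) (v + 1) x := by
    refine intervalIntegral.integral_congr_ae ?_
    have h1 : {(1:ℝ)}ᶜ ∈ MeasureTheory.ae MeasureTheory.volume :=
      MeasureTheory.compl_mem_ae_iff.mpr Real.volume_singleton
    filter_upwards [h1] with x hx hmem
    rw [Set.uIoc_of_le (by norm_num : (0:ℝ) ≤ 1)] at hmem
    exact key x ⟨hmem.1, lt_of_le_of_ne hmem.2 hx⟩
  -- compute both sides: complex beta values
  have hC : ∑ k ∈ Finset.Icc s n, (f k : ℂ) *
        ((Real.Gamma (u + 1) * Real.Gamma ((p k : ℝ) + v + 1)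
          / Real.Gamma ((u + 1) + ((p k : ℝ) + v + 1)) : ℝ) : ℂ)
      = ∑ k ∈ Finset.Icc m r, (-1 : ℂ) ^ (q k) * (g k : ℂ) *
        ((Real.Gamma ((q k : ℝ) + u + 1) * Real.Gamma (v + 1)
          / Real.Gamma (((q k : ℝ) + u + 1) + (v + 1)) : ℝ) : ℂ) := by
    calc
      ∑ k ∈ Finset.Icc s n, (f k : ℂ) *
          ((Real.Gamma (u + 1) * Real.Gamma ((p k : ℝ) + v + 1)
            / Real.Gamma ((u + 1) + ((p k : ℝ) + v + 1)) : ℝ) : ℂ)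
          = ∑ k ∈ Finset.Icc s n,
              ∫ x in (0:ℝ)..1, (f k : ℂ) * Faux (u + 1) ((p k : ℝ) + v + 1) x := by
            refine Finset.sum_congr rfl fun k _ => ?_
            rw [intervalIntegral.integral_const_mul, Faux_integral hu1 (hpv (p k))]
      _ = ∫ x in (0:ℝ)..1,
              ∑ k ∈ Finset.Icc s n, (f k : ℂ) * Faux (u + 1) ((p k : ℝ) + v + 1) x :=
            (intervalIntegral.integral_finset_sum hLint).symm
      _ = ∫ x in (0:ℝ)..1,
              ∑ k ∈ Finset.Icc m r, (-1 : ℂ) ^ (q k) * (g k : ℂ)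
                * Faux ((q k : ℝ) + u + 1) (v + 1) x := hIeq
      _ = ∑ k ∈ Finset.Icc m r,
              ∫ x in (0:ℝ)..1, (-1 : ℂ) ^ (q k) * (g k : ℂ)
                * Faux ((q k : ℝ) + u + 1) (v + 1) x :=
            intervalIntegral.integral_finset_sum hRint
      _ = ∑ k ∈ Finset.Icc m r, (-1 : ℂ) ^ (q k) * (g k : ℂ) *
            ((Real.Gamma ((q k : ℝ) + u + 1) * Real.Gamma (v + 1)
              / Real.Gamma (((q k : ℝ) + u + 1) + (v + 1)) : ℝ) : ℂ) := by
            refine Finset.sum_congr rfl fun k _ => ?_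
            rw [intervalIntegral.integral_const_mul, Faux_integral (hqu (q k)) hv1]
  -- real version
  have hReal : ∑ k ∈ Finset.Icc s n, f k *
        (Real.Gamma (u + 1) * Real.Gamma ((p k : ℝ) + v + 1)
          / Real.Gamma ((u + 1) + ((p k : ℝ) + v + 1)))
      = ∑ k ∈ Finset.Icc m r, (-1 : ℝ) ^ (q k) * g k *
        (Real.Gamma ((q k : ℝ) + u + 1) * Real.Gamma (v + 1)
          / Real.Gamma (((q k : ℝ) + u + 1) + (v + 1))) := by
    exact_mod_cast hC
  -- termwise identities relating gbinom to the beta values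
  have hterm1 : ∀ k : ℕ, (gbinom ((k : ℝ) + u + v + 1) (u + 1))⁻¹
      = (u + 1) * (Real.Gamma (u + 1) * Real.Gamma ((k : ℝ) + v + 1)
          / Real.Gamma ((u + 1) + ((k : ℝ) + v + 1))) := by
    intro k
    have g1 := Real.Gamma_pos_of_pos hu1
    have g2 := Real.Gamma_pos_of_pos (hpv k)
    have g3 := Real.Gamma_pos_of_pos (add_pos hu1 (hpv k))
    rw [gbinom, show (k : ℝ) + u + v + 1 + 1 = (u + 1) + ((k : ℝ) + v + 1) by ring,
      show (k : ℝ) + u + v + 1 - (u + 1) + 1 = (k : ℝ) + v + 1 by ring,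
      show u + 1 + 1 = (u + 1) + 1 by ring, Real.Gamma_add_one hu1.ne']
    field_simp
  have hterm2 : ∀ k : ℕ, (gbinom ((k : ℝ) + u + v + 1) (v + 1))⁻¹
      = (v + 1) * (Real.Gamma ((k : ℝ) + u + 1) * Real.Gamma (v + 1)
          / Real.Gamma (((k : ℝ) + u + 1) + (v + 1))) := by
    intro k
    have g1 := Real.Gamma_pos_of_pos hv1
    have g2 := Real.Gamma_pos_of_pos (hqu k)
    have g3 := Real.Gamma_pos_of_pos (add_pos (hqu k) hv1)
    rw [gbinom, show (k : ℝ) + u + v + 1 + 1 = ((k : ℝ) + u + 1) + (v + 1) by ring,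
      show (k : ℝ) + u + v + 1 - (v + 1) + 1 = (k : ℝ) + u + 1 by ring,
      show v + 1 + 1 = (v + 1) + 1 by ring, Real.Gamma_add_one hv1.ne']
    field_simp
  calc
    ∑ k ∈ Finset.Icc s n, f k * (gbinom ((p k : ℝ) + u + v + 1) (u + 1))⁻¹
        = (u + 1) * ∑ k ∈ Finset.Icc s n, f k *
            (Real.Gamma (u + 1) * Real.Gamma ((p k : ℝ) + v + 1)
              / Real.Gamma ((u + 1) + ((p k : ℝ) + v + 1))) := by
          rw [Finset.mul_sum]
          refine Finset.sum_congr rfl fun k _ => ?_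
          rw [hterm1 (p k)]; ring
    _ = (u + 1) * ∑ k ∈ Finset.Icc m r, (-1 : ℝ) ^ (q k) * g k *
            (Real.Gamma ((q k : ℝ) + u + 1) * Real.Gamma (v + 1)
              / Real.Gamma (((q k : ℝ) + u + 1) + (v + 1))) := by rw [hReal]
    _ = (u + 1) / (v + 1) *
          ∑ k ∈ Finset.Icc m r,
            (-1 : ℝ) ^ (q k) * g k * (gbinom ((q k : ℝ) + u + v + 1) (v + 1))⁻¹ := by
          rw [Finset.mul_sum, Finset.mul_sum]
          refine Finset.sum_congr rfl fun k _ => ?_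
          rw [hterm2 (q k)]
          exact (aux_scale hv1.ne').symm
end
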